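/- arXiv:2306.15048 — 9 statements merged into one kernel-verified Lean document; each statement's English description precedes it below -/
import Mathlib

section
/- Let U be uniformly distributed on (0,1), let F1 be a cumulative distribution function with left-continuous quantile (generalized inverse) Q0 for another cdf F0, and let Y1 be any random variable with cdf F1 defined on the same probability space as U. Then for all 0 ≤ a < b ≤ 1 and any x in (a,b), P(a < U < b and Q0(U) < Y1) ≥ max(x - a - F1(Q0(x)), 0). -/
open MeasureTheory Set Filter Function

noncomputable section

/-- `F` is a cumulative distribution function. -/
def IsCDF (F : ℝ → ℝ) : Prop :=
  Monotone F ∧ (∀ y, ContinuousWithinAt F (Set.Ici y) y) ∧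
    Tendsto F atBot (nhds 0) ∧ Tendsto F atTop (nhds 1)

theorem winner_pointwise_frechet_lower_bound
    {Ω : Type*} [MeasurableSpace Ω] (μ : Measure Ω) [IsProbabilityMeasure μ]
    (U Y1 : Ω → ℝ) (F0 F1 Q0 : ℝ → ℝ)
    (hF0 : IsCDF F0) (hF1 : IsCDF F1)
    (hQ0 : ∀ u, Q0 u = sInf {y : ℝ | u ≤ F0 y})
    (hU : Measurable U) (hUlaw : μ.map U = volume.restrict (Set.Ioo (0:ℝ) 1))
    (hY1 : Measurable Y1) (hY1law : ∀ y, (μ {ω | Y1 ω ≤ y}).toReal = F1 y)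
    (a b : ℝ) (ha : 0 ≤ a) (hab : a < b) (hb : b ≤ 1)
    (x : ℝ) (hx : x ∈ Set.Ioo a b) :
    (μ {ω | (a < U ω ∧ U ω < b) ∧ Q0 (U ω) < Y1 ω}).toReal ≥
      max (x - a - F1 (Q0 x)) 0 := by
  obtain ⟨hax, hxb⟩ := hx
  have hx1 : x < 1 := lt_of_lt_of_le hxb hb
  -- monotonicity of Q0 on (0,1)
  have hQmono : ∀ u : ℝ, 0 < u → u ≤ x → Q0 u ≤ Q0 x := by
    intro u hu hux
    rw [hQ0, hQ0]
    have hne : {y : ℝ | x ≤ F0 y}.Nonempty := by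
      obtain ⟨y, hy⟩ := (hF0.2.2.2.eventually (eventually_gt_nhds hx1)).exists
      exact ⟨y, le_of_lt hy⟩
    have hbdd : BddBelow {y : ℝ | u ≤ F0 y} := by
      obtain ⟨y0, hy0⟩ := (hF0.2.2.1.eventually (eventually_lt_nhds hu)).exists
      refine ⟨y0, fun y hy => ?_⟩
      by_contra hc
      push_neg at hc
      exact absurd (le_trans hy (hF0.1 hc.le)) (not_le.mpr hy0)
    exact csInf_le_csInf hbdd hne (fun y hy => le_trans hux hy)
  set A : Set Ω := U ⁻¹' (Set.Ioo a x) with hA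
  set B : Set Ω := {ω | Q0 x < Y1 ω} with hB
  set T : Set Ω := {ω | (a < U ω ∧ U ω < b) ∧ Q0 (U ω) < Y1 ω} with hT
  have hAmeas : MeasurableSet A := hU measurableSet_Ioo
  have hBmeas : MeasurableSet B := measurableSet_lt measurable_const hY1
  have hsub : A ∩ B ⊆ T := by
    intro ω ⟨hωA, hωB⟩
    have h1 : a < U ω := hωA.1
    have h2 : U ω < x := hωA.2
    refine ⟨⟨h1, lt_trans h2 hxb⟩, lt_of_le_of_lt ?_ hωB⟩
    exact hQmono (U ω) (lt_of_le_of_lt ha h1) h2.le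
  -- measure of A
  have hmA : μ A = ENNReal.ofReal (x - a) := by
    have : μ A = (μ.map U) (Set.Ioo a x) :=
      (Measure.map_apply hU measurableSet_Ioo).symm
    rw [this, hUlaw, Measure.restrict_apply measurableSet_Ioo]
    have hss : Set.Ioo a x ∩ Set.Ioo (0:ℝ) 1 = Set.Ioo a x := by
      apply Set.inter_eq_self_of_subset_left
      exact Set.Ioo_subset_Ioo ha hx1.le
    rw [hss, Real.volume_Ioo]
  -- measure of B
  have hmBc : μ Bᶜ = ENNReal.ofReal (F1 (Q0 x)) := by
    have hBc : Bᶜ = {ω | Y1 ω ≤ Q0 x} := by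
      ext ω; simp [hB, not_lt]
    rw [hBc]
    have hfin : μ {ω | Y1 ω ≤ Q0 x} ≠ ⊤ := measure_ne_top μ _
    rw [← hY1law (Q0 x), ENNReal.ofReal_toReal hfin]
  have hmB : (μ B).toReal = 1 - F1 (Q0 x) := by
    have hcompl : μ B + μ Bᶜ = 1 := by rw [measure_add_measure_compl (μ := μ) hBmeas]; simp
    have hfinB : μ B ≠ ⊤ := measure_ne_top μ _
    have hfinBc : μ Bᶜ ≠ ⊤ := measure_ne_top μ _
    have h1 : (μ B).toReal + (μ Bᶜ).toReal = 1 := by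
      rw [← ENNReal.toReal_add hfinB hfinBc, hcompl]; simp
    have h2 : (μ Bᶜ).toReal = F1 (Q0 x) := by
      rw [hmBc, ENNReal.toReal_ofReal]
      rw [← hY1law (Q0 x)]; exact ENNReal.toReal_nonneg
    linarith
  have hmAr : (μ A).toReal = x - a := by
    rw [hmA, ENNReal.toReal_ofReal (by linarith)]
  -- inclusion-exclusion bound
  have hkey : (μ A).toReal + (μ B).toReal - 1 ≤ (μ (A ∩ B)).toReal := by
    have hie : μ (A ∪ B) + μ (A ∩ B) = μ A + μ B :=
      measure_union_add_inter A hBmeas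
    have hAB : (μ (A ∪ B)).toReal ≤ 1 := by
      have := prob_le_one (μ := μ) (s := A ∪ B)
      exact (ENNReal.toReal_le_toReal (measure_ne_top μ _) (by simp)).mpr this |>.trans_eq (by simp)
    have h3 : (μ (A ∪ B)).toReal + (μ (A ∩ B)).toReal = (μ A).toReal + (μ B).toReal := by
      rw [← ENNReal.toReal_add (measure_ne_top μ _) (measure_ne_top μ _),
        ← ENNReal.toReal_add (measure_ne_top μ _) (measure_ne_top μ _), hie]
    linarith
  have hmono : (μ (A ∩ B)).toReal ≤ (μ T).toReal :=
    ENNReal.toReal_le_toReal (measure_ne_top μ _) (measure_ne_top μ _) |>.mpr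
      (measure_mono hsub)
  rw [ge_iff_le, max_le_iff]
  constructor
  · rw [hmAr, hmB] at hkey; linarith
  · exact ENNReal.toReal_nonneg
end
end

section
/- Let U be uniformly distributed on (0,1), F0 and F1 cdfs with Q0 the left-continuous quantile function of F0, and Y1 a random variable with cdf F1 on the same probability space. Then for all 0 ≤ a < b ≤ 1, P(a < U < b and Q0(U) < Y1) ≥ sup over x in (a,b) of max(x - a - F1(Q0(x)), 0). -/
open MeasureTheory Set Filter Function

noncomputable section

theorem winner_subgroup_lower_bound
    {Ω : Type*} [MeasurableSpace Ω] (μ : Measure Ω) [IsProbabilityMeasure μ]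
    (U Y1 : Ω → ℝ) (F0 F1 Q0 : ℝ → ℝ)
    (hF0 : IsCDF F0) (hF1 : IsCDF F1)
    (hQ0 : ∀ u, Q0 u = sInf {y : ℝ | u ≤ F0 y})
    (hU : Measurable U) (hUlaw : μ.map U = volume.restrict (Set.Ioo (0:ℝ) 1))
    (hY1 : Measurable Y1) (hY1law : ∀ y, (μ {ω | Y1 ω ≤ y}).toReal = F1 y)
    (a b : ℝ) (ha : 0 ≤ a) (hab : a < b) (hb : b ≤ 1)
 :
    (μ {ω | (a < U ω ∧ U ω < b) ∧ Q0 (U ω) < Y1 ω}).toReal ≥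
      ⨆ x ∈ Set.Ioo a b, max (x - a - F1 (Q0 x)) 0 := by
  set E := {ω | (a < U ω ∧ U ω < b) ∧ Q0 (U ω) < Y1 ω} with hE
  rw [ge_iff_le]
  apply Real.iSup_le _ ENNReal.toReal_nonneg
  intro x
  apply Real.iSup_le _ ENNReal.toReal_nonneg
  rintro ⟨hax, hxb⟩
  refine max_le ?_ ENNReal.toReal_nonneg
  -- Q0 is monotone on (0,1)
  have hQmono : ∀ u, 0 < u → u ≤ x → Q0 u ≤ Q0 x := by
    intro u hu0 hux
    rw [hQ0 u, hQ0 x]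
    have hx1 : x < 1 := lt_of_lt_of_le hxb hb
    have hne : {y : ℝ | x ≤ F0 y}.Nonempty := by
      have := (hF0.2.2.2).eventually (eventually_gt_nhds hx1)
      rcases this.exists with ⟨y, hy⟩
      exact ⟨y, le_of_lt hy⟩
    have hbdd : BddBelow {y : ℝ | u ≤ F0 y} := by
      have := (hF0.2.2.1).eventually (eventually_lt_nhds hu0)
      rcases (eventually_atBot.mp this) with ⟨y0, hy0⟩
      refine ⟨y0, fun z hz => ?_⟩
      by_contra h
      push_neg at h
      exact absurd (lt_of_le_of_lt hz (hy0 z h.le)) (lt_irrefl u)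
    exact csInf_le_csInf hbdd hne (fun y hy => le_trans hux hy)
  set A := U ⁻¹' (Set.Ioo a x) with hA
  set B := {ω | Y1 ω ≤ Q0 x} with hB
  have hsub : A \ B ⊆ E := by
    rintro ω ⟨⟨h1, h2⟩, h3⟩
    simp only [hB, mem_setOf_eq, not_le] at h3
    refine ⟨⟨h1, lt_trans h2 hxb⟩, ?_⟩
    exact lt_of_le_of_lt (hQmono _ (lt_of_le_of_lt ha h1) h2.le) h3
  have hμA : (μ A).toReal = x - a := by
    have : μ A = (μ.map U) (Set.Ioo a x) :=
      (Measure.map_apply hU measurableSet_Ioo).symm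
    rw [this, hUlaw, Measure.restrict_apply measurableSet_Ioo]
    have hss : Set.Ioo a x ∩ Set.Ioo (0:ℝ) 1 = Set.Ioo a x := by
      rw [inter_eq_left]
      intro t ht
      exact ⟨lt_of_le_of_lt ha ht.1, lt_of_lt_of_le (lt_trans ht.2 hxb) hb⟩
    rw [hss, Real.volume_Ioo, ENNReal.toReal_ofReal (by linarith)]
  have hμB : (μ B).toReal = F1 (Q0 x) := hY1law (Q0 x)
  have hle : μ A ≤ μ (A \ B) + μ B := by
    refine le_trans (measure_mono ?_) (measure_union_le _ _)
    intro ω hω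
    by_cases h : ω ∈ B
    · exact Or.inr h
    · exact Or.inl ⟨hω, h⟩
  have hfin : ∀ s : Set Ω, μ s ≠ ⊤ := fun s => measure_ne_top μ s
  have hle' : (μ A).toReal ≤ (μ (A \ B)).toReal + (μ B).toReal := by
    rw [← ENNReal.toReal_add (hfin _) (hfin _)]
    exact ENNReal.toReal_mono (by simp [ENNReal.add_ne_top, hfin]) hle
  have h2 : (μ (A \ B)).toReal ≤ (μ E).toReal :=
    ENNReal.toReal_mono (hfin _) (measure_mono hsub)
  rw [hμA, hμB] at hle'
  linarith
end
end

section
/- Let U be uniformly distributed on (0,1), F0 and F1 cdfs with Q0 the left-continuous quantile function of F0, and Y1 a random variable with cdf F1 on the same probability space. Then for all 0 ≤ a < b ≤ 1, P(a < U < b and Q0(U) < Y1) ≤ (b - a) - sup over x in (a,b) of max(b - x - 1 + F1(Q0(x)), 0). -/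
open MeasureTheory Set Filter Function

noncomputable section

theorem winner_subgroup_upper_bound
    {Ω : Type*} [MeasurableSpace Ω] (μ : Measure Ω) [IsProbabilityMeasure μ]
    (U Y1 : Ω → ℝ) (F0 F1 Q0 : ℝ → ℝ)
    (hF0 : IsCDF F0) (hF1 : IsCDF F1)
    (hQ0 : ∀ u, Q0 u = sInf {y : ℝ | u ≤ F0 y})
    (hU : Measurable U) (hUlaw : μ.map U = volume.restrict (Set.Ioo (0:ℝ) 1))
    (hY1 : Measurable Y1) (hY1law : ∀ y, (μ {ω | Y1 ω ≤ y}).toReal = F1 y)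
    (a b : ℝ) (ha : 0 ≤ a) (hab : a < b) (hb : b ≤ 1)
 :
    (μ {ω | (a < U ω ∧ U ω < b) ∧ Q0 (U ω) < Y1 ω}).toReal ≤
      (b - a) - ⨆ x ∈ Set.Ioo a b, max (b - x - 1 + F1 (Q0 x)) 0 := by
  -- Q0 is monotone on (0,1)
  have hQ0mono : ∀ u v : ℝ, 0 < u → u ≤ v → v < 1 → Q0 u ≤ Q0 v := by
    intro u v hu huv hv
    rw [hQ0 u, hQ0 v]
    have hne : {y : ℝ | v ≤ F0 y}.Nonempty := by
      have : ∀ᶠ y in atTop, v < F0 y := hF0.2.2.2.eventually (eventually_gt_nhds hv)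
      obtain ⟨y, hy⟩ := this.exists
      exact ⟨y, hy.le⟩
    have hbdd : BddBelow {y : ℝ | u ≤ F0 y} := by
      have : ∀ᶠ y in atBot, F0 y < u := hF0.2.2.1.eventually (eventually_lt_nhds hu)
      obtain ⟨y0, hy0⟩ := this.exists
      refine ⟨y0, fun y hy => ?_⟩
      by_contra hlt
      push_neg at hlt
      exact absurd (le_trans hy (hF0.1 hlt.le)) (not_le.mpr hy0)
    exact csInf_le_csInf hbdd hne (fun y hy => le_trans huv hy)
  set A : Set Ω := {ω | (a < U ω ∧ U ω < b) ∧ Q0 (U ω) < Y1 ω} with hA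
  set S : Set Ω := {ω | a < U ω ∧ U ω < b} with hS
  have hSdef : S = U ⁻¹' Set.Ioo a b := rfl
  have hμS : μ S = ENNReal.ofReal (b - a) := by
    have hss : Set.Ioo a b ⊆ Set.Ioo (0:ℝ) 1 :=
      fun u hu => ⟨lt_of_le_of_lt ha hu.1, lt_of_lt_of_le hu.2 hb⟩
    rw [hSdef, ← Measure.map_apply hU measurableSet_Ioo, hUlaw,
      Measure.restrict_apply measurableSet_Ioo,
      Set.inter_eq_left.mpr hss, Real.volume_Ioo]
  have hcle : (μ A).toReal ≤ b - a := by
    refine ENNReal.toReal_le_of_le_ofReal (by linarith) ?_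
    rw [← hμS]
    exact measure_mono (fun ω hω => hω.1)
  -- key inequality for each x
  have key : ∀ x ∈ Set.Ioo a b, b - x - 1 + F1 (Q0 x) ≤ (b - a) - (μ A).toReal := by
    intro x hx
    set B1 : Set Ω := U ⁻¹' Set.Ico x b with hB1
    set B2 : Set Ω := {ω | Y1 ω ≤ Q0 x} with hB2
    have hB1m : MeasurableSet B1 := hU measurableSet_Ico
    have hB2m : MeasurableSet B2 := hY1 measurableSet_Iic
    have hμB1 : (μ B1).toReal = b - x := by
      have hss : Set.Ico x b ⊆ Set.Ioo (0:ℝ) 1 :=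
        fun u hu => ⟨lt_of_lt_of_le (lt_of_le_of_lt ha hx.1) hu.1, lt_of_lt_of_le hu.2 hb⟩
      rw [hB1, ← Measure.map_apply hU measurableSet_Ico, hUlaw,
        Measure.restrict_apply measurableSet_Ico,
        Set.inter_eq_left.mpr hss,
        Real.volume_Ico, ENNReal.toReal_ofReal (by linarith [hx.2])]
    have hμB2 : (μ B2).toReal = F1 (Q0 x) := hY1law (Q0 x)
    -- disjointness of A and B1 ∩ B2
    have hdisj : Disjoint A (B1 ∩ B2) := by
      rw [Set.disjoint_left]
      rintro ω ⟨⟨hab', hub⟩, hlt⟩ ⟨hω1, hω2⟩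
      have h1 : Q0 x ≤ Q0 (U ω) :=
        hQ0mono x (U ω) (lt_of_le_of_lt ha hx.1) hω1.1 (lt_of_lt_of_le hω1.2 hb)
      exact absurd (lt_of_le_of_lt (le_trans hω2 h1) hlt) (lt_irrefl _)
    -- A ∪ (B1 ∩ B2) ⊆ S
    have hsub : A ∪ (B1 ∩ B2) ⊆ S := by
      rintro ω (hω | ⟨hω1, _⟩)
      · exact hω.1
      · exact ⟨lt_of_lt_of_le hx.1 hω1.1, hω1.2⟩
    have hunion : μ A + μ (B1 ∩ B2) ≤ ENNReal.ofReal (b - a) := by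
      rw [← measure_union hdisj (hB1m.inter hB2m), ← hμS]
      exact measure_mono hsub
    have hfinA : μ A ≠ ⊤ := measure_ne_top μ A
    have hfinB : μ (B1 ∩ B2) ≠ ⊤ := measure_ne_top μ _
    have hsum : (μ A).toReal + (μ (B1 ∩ B2)).toReal ≤ b - a := by
      rw [← ENNReal.toReal_add hfinA hfinB]
      exact ENNReal.toReal_le_of_le_ofReal (by linarith) hunion
    -- inclusion-exclusion
    have hie : μ (B1 ∪ B2) + μ (B1 ∩ B2) = μ B1 + μ B2 :=
      measure_union_add_inter B1 hB2m
    have hieR : (μ (B1 ∪ B2)).toReal + (μ (B1 ∩ B2)).toReal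
        = (b - x) + F1 (Q0 x) := by
      rw [← ENNReal.toReal_add (measure_ne_top μ _) hfinB, hie,
        ENNReal.toReal_add (measure_ne_top μ _) (measure_ne_top μ _), hμB1, hμB2]
    have hUle : (μ (B1 ∪ B2)).toReal ≤ 1 := by
      rw [← ENNReal.toReal_one]
      exact ENNReal.toReal_mono (by simp) (prob_le_one)
    linarith
  -- conclude via iSup
  have hnn : 0 ≤ (b - a) - (μ A).toReal := by linarith
  have hsup : (⨆ x ∈ Set.Ioo a b, max (b - x - 1 + F1 (Q0 x)) 0)
      ≤ (b - a) - (μ A).toReal := by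
    refine Real.iSup_le (fun x => Real.iSup_le (fun hx => ?_) hnn) hnn
    exact max_le (key x hx) hnn
  linarith
end
end

section
/- Let U be uniformly distributed on (0,1), F0 and F1 cdfs with Q0 the left-continuous quantile function of F0, F1(y-) denoting the left limit of F1 at y, and Y1 a random variable with cdf F1 on the same probability space. Then for all 0 ≤ a < b ≤ 1, P(a < U < b and Y1 < Q0(U)) ≥ sup over x in (a,b) of max(b - x - 1 + F1(Q0(x)-), 0). -/
open MeasureTheory Set Filter Function

noncomputable section

theorem loser_subgroup_lower_bound
    {Ω : Type*} [MeasurableSpace Ω] (μ : Measure Ω) [IsProbabilityMeasure μ]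
    (U Y1 : Ω → ℝ) (F0 F1 Q0 : ℝ → ℝ)
    (hF0 : IsCDF F0) (hF1 : IsCDF F1)
    (hQ0 : ∀ u, Q0 u = sInf {y : ℝ | u ≤ F0 y})
    (hU : Measurable U) (hUlaw : μ.map U = volume.restrict (Set.Ioo (0:ℝ) 1))
    (hY1 : Measurable Y1) (hY1law : ∀ y, (μ {ω | Y1 ω ≤ y}).toReal = F1 y)
    (a b : ℝ) (ha : 0 ≤ a) (hab : a < b) (hb : b ≤ 1)
 :
    (μ {ω | (a < U ω ∧ U ω < b) ∧ Y1 ω < Q0 (U ω)}).toReal ≥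
      ⨆ x ∈ Set.Ioo a b, max (b - x - 1 + leftLim F1 (Q0 x)) 0 := by
  set A := {ω | (a < U ω ∧ U ω < b) ∧ Y1 ω < Q0 (U ω)} with hA
  set p := (μ A).toReal with hp
  have hp0 : 0 ≤ p := ENNReal.toReal_nonneg
  -- monotonicity of Q0 on (0,1)
  have hQmono : ∀ s t : ℝ, 0 < s → t < 1 → s ≤ t → Q0 s ≤ Q0 t := by
    intro s t hs ht hst
    rw [hQ0, hQ0]
    have hne : {y : ℝ | t ≤ F0 y}.Nonempty := by
      have : ∀ᶠ y in atTop, t < F0 y := hF0.2.2.2.eventually (eventually_gt_nhds ht)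
      obtain ⟨y, hy⟩ := this.exists
      exact ⟨y, hy.le⟩
    have hbdd : BddBelow {y : ℝ | s ≤ F0 y} := by
      have : ∀ᶠ y in atBot, F0 y < s := hF0.2.2.1.eventually (eventually_lt_nhds hs)
      obtain ⟨w, hw⟩ := this.exists
      refine ⟨w, fun y hy => ?_⟩
      by_contra hlt
      push_neg at hlt
      exact absurd (le_trans hy (hF0.1 hlt.le)) (not_le.mpr hw)
    exact csInf_le_csInf hbdd hne (fun y hy => le_trans hst hy)
  rw [ge_iff_le]
  refine Real.iSup_le (fun x => Real.iSup_le (fun hx => ?_) hp0) hp0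
  obtain ⟨hax, hxb⟩ := hx
  have hx0 : 0 < x := lt_of_le_of_lt ha hax
  -- for every z < Q0 x, b - x - 1 + F1 z ≤ p
  have key : ∀ z : ℝ, z < Q0 x → F1 z ≤ p + 1 - (b - x) := by
    intro z hz
    set S := U ⁻¹' Set.Ioo x b with hSdef
    set T := Y1 ⁻¹' Set.Iic z with hTdef
    have hTm : MeasurableSet T := hY1 measurableSet_Iic
    have hsub : S ∩ T ⊆ A := by
      rintro ω ⟨hωS, hωT⟩
      obtain ⟨hxu, hub⟩ := hωS
      refine ⟨⟨lt_trans hax hxu, hub⟩, ?_⟩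
      have hq : Q0 x ≤ Q0 (U ω) := hQmono x (U ω) hx0 (lt_of_lt_of_le hub hb) hxu.le
      exact lt_of_le_of_lt hωT (lt_of_lt_of_le hz hq)
    have hS : (μ S).toReal = b - x := by
      have h1 : μ S = (μ.map U) (Set.Ioo x b) := (Measure.map_apply hU measurableSet_Ioo).symm
      rw [h1, hUlaw, Measure.restrict_apply measurableSet_Ioo]
      have hss : Set.Ioo x b ∩ Set.Ioo (0:ℝ) 1 = Set.Ioo x b := by
        apply Set.inter_eq_left.mpr
        intro t ht
        exact ⟨lt_trans hx0 ht.1, lt_of_lt_of_le ht.2 hb⟩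
      rw [hss, Real.volume_Ioo, ENNReal.toReal_ofReal (by linarith)]
    have hT : (μ T).toReal = F1 z := hY1law z
    have hunion : μ S + μ T ≤ 1 + μ (S ∩ T) := by
      have := measure_union_add_inter (μ := μ) S hTm
      rw [← this]
      gcongr
      exact prob_le_one
    have hsum : (μ S).toReal + (μ T).toReal ≤ 1 + (μ (S ∩ T)).toReal := by
      have h1 : ((μ S) + (μ T)).toReal ≤ ((1 : ENNReal) + μ (S ∩ T)).toReal :=
        ENNReal.toReal_mono (by finiteness) hunion
      rwa [ENNReal.toReal_add (measure_ne_top μ S) (measure_ne_top μ T),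
        ENNReal.toReal_add (by norm_num) (measure_ne_top μ _), ENNReal.toReal_one] at h1
    have hle : (μ (S ∩ T)).toReal ≤ p :=
      ENNReal.toReal_mono (measure_ne_top μ A) (measure_mono hsub)
    rw [hS, hT] at hsum
    linarith
  have hL : leftLim F1 (Q0 x) ≤ p + 1 - (b - x) := by
    have htend : Tendsto F1 (nhdsWithin (Q0 x) (Set.Iio (Q0 x))) (nhds (leftLim F1 (Q0 x))) :=
      hF1.1.tendsto_leftLim (Q0 x)
    exact le_of_tendsto htend (eventually_of_mem self_mem_nhdsWithin fun z hz => key z hz)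
  exact max_le (by linarith) hp0
end
end

section
/- Let U be uniformly distributed on (0,1), F0 and F1 cdfs with Q0 the left-continuous quantile of F0, and Y1 a random variable with cdf F1 on the same probability space. Then for all 0 ≤ a < b ≤ 1, P(a < U < b and Y1 < Q0(U)) ≤ (b - a) - sup over x in (a,b) of max(x - a - F1(Q0(x)-), 0). -/
open MeasureTheory Set Filter Function

noncomputable section

theorem loser_subgroup_upper_bound
    {Ω : Type*} [MeasurableSpace Ω] (μ : Measure Ω) [IsProbabilityMeasure μ]
    (U Y1 : Ω → ℝ) (F0 F1 Q0 : ℝ → ℝ)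
    (hF0 : IsCDF F0) (hF1 : IsCDF F1)
    (hQ0 : ∀ u, Q0 u = sInf {y : ℝ | u ≤ F0 y})
    (hU : Measurable U) (hUlaw : μ.map U = volume.restrict (Set.Ioo (0:ℝ) 1))
    (hY1 : Measurable Y1) (hY1law : ∀ y, (μ {ω | Y1 ω ≤ y}).toReal = F1 y)
    (a b : ℝ) (ha : 0 ≤ a) (hab : a < b) (hb : b ≤ 1)
 :
    (μ {ω | (a < U ω ∧ U ω < b) ∧ Y1 ω < Q0 (U ω)}).toReal ≤
      (b - a) - ⨆ x ∈ Set.Ioo a b, max (x - a - leftLim F1 (Q0 x)) 0 := by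
  obtain ⟨hF0m, -, hF0bot, hF0top⟩ := hF0
  obtain ⟨hF1m, -, -, -⟩ := hF1
  -- F1 is nonnegative
  have hF1nonneg : ∀ z, 0 ≤ F1 z := fun z => (hY1law z) ▸ ENNReal.toReal_nonneg
  -- monotonicity of Q0 on (0,1)
  have hQ0mono : ∀ u v : ℝ, 0 < u → u ≤ v → v < 1 → Q0 u ≤ Q0 v := by
    intro u v hu huv hv1
    rw [hQ0 u, hQ0 v]
    have hbdd : BddBelow {y : ℝ | u ≤ F0 y} := by
      obtain ⟨y0, hy0⟩ := (hF0bot.eventually_lt_const hu).exists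
      refine ⟨y0, fun z hz => ?_⟩
      by_contra hzy
      exact absurd (le_trans hz (hF0m (le_of_not_ge hzy))) (not_le.2 hy0)
    have hne : {y : ℝ | v ≤ F0 y}.Nonempty := by
      obtain ⟨y1, hy1⟩ := (hF0top.eventually_const_lt hv1).exists
      exact ⟨y1, hy1.le⟩
    exact csInf_le_csInf hbdd hne (fun z hz => le_trans huv hz)
  -- law of U on subsets of (0,1)
  have hlaw : ∀ S : Set ℝ, MeasurableSet S → S ⊆ Set.Ioo 0 1 → μ (U ⁻¹' S) = volume S := by
    intro S hS hsub
    rw [← Measure.map_apply hU hS, hUlaw, Measure.restrict_apply hS,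
      Set.inter_eq_self_of_subset_left hsub]
  set E := {ω | (a < U ω ∧ U ω < b) ∧ Y1 ω < Q0 (U ω)} with hE
  set B := U ⁻¹' Set.Ioo a b with hBdef
  have hBvol : μ B = ENNReal.ofReal (b - a) := by
    rw [hlaw _ measurableSet_Ioo (fun z hz => ⟨lt_of_le_of_lt ha hz.1, lt_of_lt_of_le hz.2 hb⟩),
      Real.volume_Ioo]
  have hEB : E ⊆ B := fun ω hω => ⟨hω.1.1, hω.1.2⟩
  have hEle : (μ E).toReal ≤ b - a := by
    have := ENNReal.toReal_mono (measure_ne_top μ B) (measure_mono hEB)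
    rwa [hBvol, ENNReal.toReal_ofReal (by linarith)] at this
  rw [le_sub_comm]
  refine Real.iSup_le (fun x => Real.iSup_le (fun hx => ?_) (by linarith)) (by linarith)
  -- now x ∈ Ioo a b
  obtain ⟨hax, hxb⟩ := hx
  set y := Q0 x with hy
  set L := leftLim F1 y with hL
  have hLnonneg : 0 ≤ L := le_trans (hF1nonneg (y - 1)) (hF1m.le_leftLim (by linarith))
  refine max_le ?_ (by linarith)
  set C := U ⁻¹' Set.Ioc a x with hCdef
  set D := {ω | Y1 ω < y} with hDdef
  have hCmeas : MeasurableSet C := hU measurableSet_Ioc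
  have hDmeas : MeasurableSet D := hY1 measurableSet_Iio
  set A := C \ D with hAdef
  have hAmeas : MeasurableSet A := hCmeas.diff hDmeas
  have hCvol : μ C = ENNReal.ofReal (x - a) := by
    rw [hlaw _ measurableSet_Ioc
      (fun z hz => ⟨lt_of_le_of_lt ha hz.1, lt_of_le_of_lt hz.2 (lt_of_lt_of_le hxb hb)⟩),
      Real.volume_Ioc]
  -- bound on μ D
  have hDle : (μ D).toReal ≤ L := by
    set s : ℕ → Set Ω := fun n => {ω | Y1 ω ≤ y - 1 / (n + 1)} with hs
    have hsm : Monotone s := by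
      intro m n hmn ω hω
      have h1 : (1 : ℝ) / (n + 1) ≤ 1 / (m + 1) := by
        apply one_div_le_one_div_of_le (by positivity)
        exact_mod_cast Nat.succ_le_succ hmn
      simp only [hs, Set.mem_setOf_eq] at hω ⊢
      linarith
    have hunion : ⋃ n, s n = D := by
      ext ω
      simp only [hs, hDdef, Set.mem_iUnion, Set.mem_setOf_eq]
      constructor
      · rintro ⟨n, hn⟩
        have : (0:ℝ) < 1 / (n + 1) := by positivity
        linarith
      · intro hω
        obtain ⟨n, hn⟩ := exists_nat_one_div_lt (sub_pos.2 hω)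
        exact ⟨n, by linarith⟩
    have htend := tendsto_measure_iUnion_atTop (μ := μ) hsm
    rw [hunion] at htend
    have hDbd : μ D ≤ ENNReal.ofReal L := by
      refine le_of_tendsto htend (Filter.Eventually.of_forall fun n => ?_)
      have hval : (μ (s n)).toReal = F1 (y - 1 / (n + 1)) := hY1law _
      have : μ (s n) = ENNReal.ofReal (F1 (y - 1 / (n + 1))) := by
        rw [← hval, ENNReal.ofReal_toReal (measure_ne_top μ _)]
      show μ (s n) ≤ ENNReal.ofReal L
      rw [this]
      exact ENNReal.ofReal_le_ofReal
        (hF1m.le_leftLim (sub_lt_self y (by positivity)))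
    have := ENNReal.toReal_mono ENNReal.ofReal_ne_top hDbd
    rwa [ENNReal.toReal_ofReal hLnonneg] at this
  -- E ⊆ B \ A
  have hAB : A ⊆ B := fun ω hω =>
    ⟨hω.1.1, lt_of_le_of_lt hω.1.2 hxb⟩
  have hEBA : E ⊆ B \ A := by
    rintro ω ⟨⟨h1, h2⟩, h3⟩
    refine ⟨⟨h1, h2⟩, fun hA => ?_⟩
    have hUx : U ω ≤ x := hA.1.2
    have hyY : y ≤ Y1 ω := not_lt.1 hA.2
    have : Q0 (U ω) ≤ y := hQ0mono (U ω) x (lt_of_le_of_lt ha h1) hUx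
      (lt_of_lt_of_le hxb hb)
    linarith
  -- μ E ≤ (b - a) - μ A
  have hkey : (μ E).toReal ≤ (b - a) - (μ A).toReal := by
    have h2 : μ (B \ A) = μ B - μ A :=
      measure_diff hAB hAmeas.nullMeasurableSet (measure_ne_top μ A)
    have h3 : (μ E).toReal ≤ (μ (B \ A)).toReal :=
      ENNReal.toReal_mono (measure_ne_top μ _) (measure_mono hEBA)
    rwa [h2, ENNReal.toReal_sub_of_le (measure_mono hAB) (measure_ne_top μ B), hBvol,
      ENNReal.toReal_ofReal (by linarith)] at h3
  -- x - a ≤ μ A + L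
  have hCAD : C ⊆ A ∪ D := fun ω hω => by
    by_cases hωD : ω ∈ D
    · exact Or.inr hωD
    · exact Or.inl ⟨hω, hωD⟩
  have hxa : x - a ≤ (μ A).toReal + L := by
    have h1 : (μ C).toReal ≤ (μ A).toReal + (μ D).toReal := by
      have := ENNReal.toReal_mono
        (by simp [ENNReal.add_ne_top, measure_ne_top] : μ A + μ D ≠ ⊤)
        (le_trans (measure_mono hCAD) (measure_union_le A D))
      rwa [ENNReal.toReal_add (measure_ne_top μ A) (measure_ne_top μ D)] at this
    rw [hCvol, ENNReal.toReal_ofReal (by linarith)] at h1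
    linarith
  linarith
end
end

section
/- Let Q0 and Q1 be the left-continuous quantile functions of cdfs F0 and F1, let U ~ Uniform(0,1), and let Δ = sup over x in (a,b) of max(x - a - F1(Q0(x)), 0) for 0 ≤ a < b ≤ 1 (assume Δ < b - a). If U1 is defined so that U1 = U - a - Δ whenever a + Δ < U < b, then for every u in (a + Δ, b), Q1(u - a - Δ) ≤ Q0(u); that is, no individual with rank u in (a+Δ, b) is a winner under the coupling Y1 = Q1(U1), Y0 = Q0(U). -/
open MeasureTheory Set Filter Function

noncomputable section

theorem winner_lower_bound_attained
    (F0 F1 Q0 Q1 : ℝ → ℝ) (hF0 : IsCDF F0) (hF1 : IsCDF F1)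
    (hQ0 : ∀ u, Q0 u = sInf {y : ℝ | u ≤ F0 y})
    (hQ1 : ∀ u, Q1 u = sInf {y : ℝ | u ≤ F1 y})
    (a b : ℝ) (ha : 0 ≤ a) (hab : a < b) (hb : b ≤ 1)
    (Δ : ℝ) (hΔdef : Δ = ⨆ x ∈ Set.Ioo a b, max (x - a - F1 (Q0 x)) 0)
    (hΔ : Δ < b - a) :
    ∀ u ∈ Set.Ioo (a + Δ) b, Q1 (u - a - Δ) ≤ Q0 u := by
  obtain ⟨hF1mono, _, hF1bot, _⟩ := hF1
  -- F1 is nonnegative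
  have hF1nonneg : ∀ y, 0 ≤ F1 y := by
    intro y
    refine le_of_tendsto hF1bot (eventually_atBot.2 ⟨y, fun z hz => hF1mono hz⟩)
  -- Δ is nonnegative and bounds the function on Ioo a b
  set f : ℝ → ℝ := fun x => max (x - a - F1 (Q0 x)) 0 with hf
  set g : ℝ → ℝ := fun x => ⨆ _ : x ∈ Set.Ioo a b, f x with hg
  have hgbdd : ∀ x, g x ≤ b - a := by
    intro x
    by_cases hx : x ∈ Set.Ioo a b
    · rw [hg]
      simp only [ciSup_pos hx]
      refine max_le ?_ (by linarith [hab.le])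
      have := hF1nonneg (Q0 x)
      have := hx.2
      linarith
    · have h0 : g x = 0 := by
        rw [hg]
        haveI : IsEmpty (x ∈ Set.Ioo a b) := ⟨hx⟩
        exact Real.iSup_of_isEmpty _
      rw [h0]; linarith [hab.le]
  have hle : ∀ u ∈ Set.Ioo a b, f u ≤ Δ := by
    intro u hu
    have h1 : f u = g u := by rw [hg]; exact (ciSup_pos (f := fun _ : u ∈ Set.Ioo a b => f u) hu).symm
    rw [h1, hΔdef]
    exact le_ciSup ⟨b - a, by rintro y ⟨x, rfl⟩; exact hgbdd x⟩ u
  intro u hu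
  obtain ⟨hu1, hu2⟩ := hu
  have hΔ0 : 0 ≤ Δ := by
    have := hle ((a + b) / 2) ⟨by linarith, by linarith⟩
    exact le_trans (le_max_right _ _) this
  have hua : a < u := by linarith
  have hkey : u - a - Δ ≤ F1 (Q0 u) := by
    have := hle u ⟨hua, hu2⟩
    have h2 : u - a - F1 (Q0 u) ≤ Δ := le_trans (le_max_left _ _) this
    linarith
  have hc : 0 < u - a - Δ := by linarith
  -- Q0 u is in the set defining Q1 (u - a - Δ)
  rw [hQ1]
  have hmem : Q0 u ∈ {y : ℝ | u - a - Δ ≤ F1 y} := hkey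
  refine csInf_le ?_ hmem
  -- bounded below
  obtain ⟨y0, hy0⟩ := (hF1bot.eventually (gt_mem_nhds hc)).exists
  refine ⟨y0, fun y hy => ?_⟩
  by_contra h
  push_neg at h
  exact absurd (le_trans hy (hF1mono h.le)) (not_le.2 hy0)
end
end

section
/- Let Q0, Q1 be left-continuous quantile functions of cdfs F0, F1 and let 0 ≤ a < b ≤ 1. Suppose f : ℝ → ℝ is nondecreasing and convex. Then for any random variable pair (Y0, Y1) with Y0 = Q0(U), U ~ Uniform(0,1), and Y1 having cdf F1 (arbitrary joint distribution), E[f(Y1 - Y0) · 1{a < U < b}] ≥ ∫_a^b f(Q1(u - a) - Q0(u)) du. -/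
open MeasureTheory Set Filter Function

noncomputable section

namespace Lemma1Aux

/-- A function that is monotone on a measurable set, extended by 0, is measurable. -/
lemma measurableSet_monotoneOn_le {E : Set ℝ} (hE : MeasurableSet E) {φ : ℝ → ℝ}
    (hφ : MonotoneOn φ E) (r : ℝ) : MeasurableSet {t | t ∈ E ∧ φ t ≤ r} := by
  set S := {t | t ∈ E ∧ φ t ≤ r} with hSdef
  rcases eq_empty_or_nonempty S with hS | hne
  · rw [hS]; exact MeasurableSet.empty
  by_cases hbdd : BddAbove S
  · set s := sSup S with hs
    have h1 : E ∩ Iio s ⊆ S := by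
      rintro t ⟨htE, hts⟩
      obtain ⟨t', ht'S, htt'⟩ := exists_lt_of_lt_csSup hne hts
      exact ⟨htE, (hφ htE ht'S.1 htt'.le).trans ht'S.2⟩
    have h2 : S = (E ∩ Iio s) ∪ (S ∩ {s}) := by
      apply Subset.antisymm
      · intro t htS
        rcases lt_or_eq_of_le (le_csSup hbdd htS) with h | h
        · exact Or.inl ⟨htS.1, h⟩
        · exact Or.inr ⟨htS, h⟩
      · rintro t (ht | ht)
        · exact h1 ht
        · exact ht.1
    rw [h2]
    exact (hE.inter measurableSet_Iio).union
      (((countable_singleton s).mono inter_subset_right).measurableSet)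
  · have : S = E := by
      apply Subset.antisymm (fun t ht => ht.1)
      intro t htE
      obtain ⟨t', ht'S, htt'⟩ := not_bddAbove_iff.mp hbdd t
      exact ⟨htE, (hφ htE ht'S.1 htt'.le).trans ht'S.2⟩
    rw [this]; exact hE

lemma measurable_indicator_monotoneOn {E : Set ℝ} (hE : MeasurableSet E) {φ : ℝ → ℝ}
    (hφ : MonotoneOn φ E) : Measurable (E.indicator φ) := by
  apply measurable_of_Iic
  intro r
  have hset : E.indicator φ ⁻¹' Iic r =
      {t | t ∈ E ∧ φ t ≤ r} ∪ (if (0:ℝ) ≤ r then Eᶜ else (∅ : Set ℝ)) := by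
    ext t
    by_cases htE : t ∈ E <;> by_cases h0r : (0:ℝ) ≤ r <;>
      simp [Set.indicator_of_mem, Set.indicator_of_notMem, htE, h0r]
  rw [hset]
  refine (measurableSet_monotoneOn_le hE hφ r).union ?_
  split_ifs
  · exact hE.compl
  · exact MeasurableSet.empty

section CDFfacts

variable {F : ℝ → ℝ}

/-- Below the pieces of `IsCDF` are used as explicit hypotheses. -/
lemma cdf_nonneg (hmono : Monotone F) (h0 : Tendsto F atBot (nhds 0)) (y : ℝ) : 0 ≤ F y := by
  refine le_of_tendsto h0 ?_
  filter_upwards [eventually_le_atBot y] with z hz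
  exact hmono hz

lemma cdf_le_one (hmono : Monotone F) (h1 : Tendsto F atTop (nhds 1)) (y : ℝ) : F y ≤ 1 := by
  refine ge_of_tendsto h1 ?_
  filter_upwards [eventually_ge_atTop y] with z hz
  exact hmono hz

lemma quantile_set_nonempty (h1 : Tendsto F atTop (nhds 1)) {v : ℝ} (hv : v < 1) :
    {y : ℝ | v ≤ F y}.Nonempty := by
  have := (h1.eventually (eventually_ge_nhds hv)).exists
  obtain ⟨y, hy⟩ := this
  exact ⟨y, hy⟩

lemma quantile_set_bddBelow (hmono : Monotone F) (h0 : Tendsto F atBot (nhds 0)) {v : ℝ}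
    (hv : 0 < v) : BddBelow {y : ℝ | v ≤ F y} := by
  obtain ⟨y₀, hy₀⟩ := eventually_atBot.mp (h0.eventually (eventually_lt_nhds hv))
  refine ⟨y₀, fun y hy => ?_⟩
  by_contra hlt
  push_neg at hlt
  exact absurd (hy.trans (hmono hlt.le)) (not_le.mpr (hy₀ y₀ le_rfl))

end CDFfacts

/-- The left-continuous generalized inverse. -/
def quant (F : ℝ → ℝ) (v : ℝ) : ℝ := sInf {y : ℝ | v ≤ F y}

lemma quant_galois (hmono : Monotone F) (hrc : ∀ y, ContinuousWithinAt F (Set.Ici y) y)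
    (h0 : Tendsto F atBot (nhds 0)) (h1 : Tendsto F atTop (nhds 1))
    {v : ℝ} (hv0 : 0 < v) (hv1 : v < 1) (t : ℝ) :
    quant F v ≤ t ↔ v ≤ F t := by
  have hne := quantile_set_nonempty h1 hv1
  have hbdd := quantile_set_bddBelow hmono h0 hv0
  constructor
  · intro hq
    -- v ≤ F (quant F v) by right continuity
    have hFq : v ≤ F (quant F v) := by
      have hev : ∀ y ∈ Ioi (quant F v), v ≤ F y := by
        intro y hy
        obtain ⟨s, hs, hsy⟩ := (csInf_lt_iff hbdd hne).mp hy
        exact le_trans hs (hmono hsy.le)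
      have htend : Tendsto F (nhdsWithin (quant F v) (Ioi (quant F v))) (nhds (F (quant F v))) :=
        (hrc (quant F v)).mono_left (nhdsWithin_mono _ Ioi_subset_Ici_self)
      refine ge_of_tendsto htend ?_
      filter_upwards [self_mem_nhdsWithin] with y hy using hev y hy
    exact hFq.trans (hmono hq)
  · intro hFt
    exact csInf_le hbdd hFt

lemma quant_monotoneOn (hmono : Monotone F) (h0 : Tendsto F atBot (nhds 0))
    (h1 : Tendsto F atTop (nhds 1)) : MonotoneOn (quant F) (Ioo (0:ℝ) 1) := by
  intro v hv v' hv' hvv'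
  exact csInf_le_csInf (quantile_set_bddBelow hmono h0 hv.1)
    (quantile_set_nonempty h1 hv'.2) (fun y hy => le_trans hvv' hy)

/-- measurable extension of quant by 0 outside (0,1). -/
def quantI (F : ℝ → ℝ) : ℝ → ℝ := (Ioo (0:ℝ) 1).indicator (quant F)

lemma quantI_eq (F : ℝ → ℝ) {v : ℝ} (hv : v ∈ Ioo (0:ℝ) 1) : quantI F v = quant F v :=
  Set.indicator_of_mem hv _

lemma measurable_quantI (hmono : Monotone F) (h0 : Tendsto F atBot (nhds 0))
    (h1 : Tendsto F atTop (nhds 1)) : Measurable (quantI F) :=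
  measurable_indicator_monotoneOn measurableSet_Ioo (quant_monotoneOn hmono h0 h1)

section RightDeriv

variable {f : ℝ → ℝ}

/-- Right derivative of a convex function. -/
def rd (f : ℝ → ℝ) (x : ℝ) : ℝ := sInf (slope f x '' Ioi x)

variable (hconv : ConvexOn ℝ univ f) (hmono : Monotone f)
include hconv hmono

lemma slope_nonneg' {x y : ℝ} (hxy : x < y) : 0 ≤ slope f x y := by
  rw [slope_def_field]
  exact div_nonneg (sub_nonneg.mpr (hmono hxy.le)) (sub_nonneg.mpr hxy.le)

lemma rd_bddBelow (x : ℝ) : BddBelow (slope f x '' Ioi x) := by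
  refine ⟨0, ?_⟩
  rintro s ⟨y, hy, rfl⟩
  exact slope_nonneg' hconv hmono hy

lemma rd_nonneg (x : ℝ) : 0 ≤ rd f x := by
  refine le_csInf ⟨slope f x (x+1), ⟨x+1, by simp, rfl⟩⟩ ?_
  rintro s ⟨y, hy, rfl⟩
  exact slope_nonneg' hconv hmono hy

lemma rd_le_slope {x y : ℝ} (hxy : x < y) : rd f x ≤ slope f x y :=
  csInf_le (rd_bddBelow hconv hmono x) ⟨y, hxy, rfl⟩

lemma slope_monotoneOn (x : ℝ) : MonotoneOn (slope f x) (Ioi x) := by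
  have := hconv.slope_mono (mem_univ x)
  intro y hy z hz hyz
  exact this ⟨trivial, ne_of_gt hy⟩ ⟨trivial, ne_of_gt hz⟩ hyz

lemma hasDerivWithinAt_rd (x : ℝ) : HasDerivWithinAt f (rd f x) (Ioi x) x := by
  rw [hasDerivWithinAt_iff_tendsto_slope' (notMem_Ioi_self)]
  exact MonotoneOn.tendsto_nhdsGT (slope_monotoneOn hconv hmono x)
    (rd_bddBelow hconv hmono x)

lemma slope_le_rd {x y : ℝ} (hxy : x < y) : slope f x y ≤ rd f y := by
  refine le_csInf ⟨slope f y (y+1), ⟨y+1, by simp, rfl⟩⟩ ?_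
  rintro s ⟨z, hz, rfl⟩
  have h1 : slope f x y ≤ slope f x z := by
    have := hconv.slope_mono (mem_univ x)
    exact this ⟨trivial, ne_of_gt hxy⟩ ⟨trivial, ne_of_gt (hxy.trans hz)⟩ (le_of_lt hz)
  have h2 : slope f x z ≤ slope f y z := by
    have := hconv.slope_mono (mem_univ z)
    rw [slope_comm f x z, slope_comm f y z]
    exact this ⟨trivial, ne_of_lt (hxy.trans hz)⟩ ⟨trivial, ne_of_lt hz⟩ hxy.le
  exact h1.trans h2

lemma rd_mono : Monotone (rd f) := by
  intro x y hxy
  rcases eq_or_lt_of_le hxy with rfl | hlt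
  · exact le_refl _
  calc rd f x ≤ slope f x y := rd_le_slope hconv hmono hlt
    _ ≤ rd f y := slope_le_rd hconv hmono hlt

lemma ftc_rd {x y : ℝ} (hxy : x ≤ y) : ∫ t in x..y, rd f t = f y - f x := by
  refine intervalIntegral.integral_eq_sub_of_hasDeriv_right_of_le hxy ?_ ?_ ?_
  · exact (hconv.continuousOn isOpen_univ).mono (subset_univ _)
  · intro t _
    exact hasDerivWithinAt_rd hconv hmono t
  · exact (rd_mono hconv hmono).intervalIntegrable

end RightDeriv

section Clamp

/-- clamping into [-M, M] contracts increments of a monotone function. -/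
lemma clamp_mono (M : ℝ) : Monotone (fun x : ℝ => max (min x M) (-M)) :=
  fun _ _ hxy => max_le_max (min_le_min hxy le_rfl) le_rfl

lemma clamp_abs_le {H : ℝ → ℝ} (hH : Monotone H) {M : ℝ} (hM : 0 ≤ M) (p q : ℝ) :
    |H (max (min q M) (-M)) - H (max (min p M) (-M))| ≤ |H q - H p| := by
  have key : ∀ p q : ℝ, p ≤ q →
      H (max (min q M) (-M)) - H (max (min p M) (-M)) ≤ H q - H p := by
    intro p q hpq
    rcases lt_or_ge q (-M) with hq | hq
    · have hp : p < -M := lt_of_le_of_lt hpq hq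
      rw [min_eq_left (hq.le.trans (by linarith)), min_eq_left (hp.le.trans (by linarith)),
        max_eq_right hq.le, max_eq_right hp.le]
      simp only [sub_self]
      linarith [hH hpq]
    · rcases lt_or_ge M p with hp | hp
      · have hq' : M < q := lt_of_lt_of_le hp hpq
        rw [min_eq_right hp.le, min_eq_right hq'.le]
        simp only [sub_self]
        linarith [hH hpq]
      · -- -M ≤ q, p ≤ M
        have h1 : max (min q M) (-M) ≤ q := max_le (min_le_left q M) hq
        have h2 : p ≤ max (min p M) (-M) := by
          rw [min_eq_left hp]; exact le_max_left _ _
        have := hH h1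
        have := hH h2
        linarith
  rcases le_total p q with hpq | hpq
  · have h0 : 0 ≤ H q - H p := by linarith [hH hpq]
    have h0' : 0 ≤ H (max (min q M) (-M)) - H (max (min p M) (-M)) := by
      have := hH (clamp_mono M hpq)
      linarith
    rw [abs_of_nonneg h0, abs_of_nonneg h0']
    exact key p q hpq
  · have h0 : 0 ≤ H p - H q := by linarith [hH hpq]
    have h0' : 0 ≤ H (max (min p M) (-M)) - H (max (min q M) (-M)) := by
      have := hH (clamp_mono M hpq)
      linarith
    rw [abs_sub_comm, abs_sub_comm (H q), abs_of_nonneg h0, abs_of_nonneg h0']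
    exact key q p hpq

end Clamp

section HN

variable {f : ℝ → ℝ} (hconv : ConvexOn ℝ univ f) (hmono : Monotone f)

/-- slope-capped derivative. -/
def phiN (f : ℝ → ℝ) (n : ℕ) : ℝ → ℝ := fun t => min (rd f t) (rd f (n : ℝ))

/-- slope-capped approximation of `f` from below. -/
def hN (f : ℝ → ℝ) (n : ℕ) : ℝ → ℝ := fun x => f 0 + ∫ t in (0:ℝ)..x, phiN f n t

include hconv hmono

lemma phiN_mono (n : ℕ) : Monotone (phiN f n) :=
  fun _ _ hxy => min_le_min (rd_mono hconv hmono hxy) le_rfl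

lemma phiN_nonneg (n : ℕ) (t : ℝ) : 0 ≤ phiN f n t :=
  le_min (rd_nonneg hconv hmono t) (rd_nonneg hconv hmono _)

lemma phiN_le_cap (n : ℕ) (t : ℝ) : phiN f n t ≤ rd f (n:ℝ) := min_le_right _ _

lemma phiN_le_rd (n : ℕ) (t : ℝ) : phiN f n t ≤ rd f t := min_le_left _ _

omit hconv hmono in
lemma phiN_intInt (hconv : ConvexOn ℝ univ f) (hmono : Monotone f) (n : ℕ) (x y : ℝ) :
    IntervalIntegrable (phiN f n) volume x y :=
  (phiN_mono hconv hmono n).intervalIntegrable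

lemma hN_diff (n : ℕ) (x y : ℝ) : hN f n y - hN f n x = ∫ t in x..y, phiN f n t := by
  have h1 := intervalIntegral.integral_add_adjacent_intervals
    (phiN_intInt hconv hmono n 0 x) (phiN_intInt hconv hmono n x y)
  simp only [hN]
  linarith

lemma intRd_eq (x : ℝ) : ∫ t in (0:ℝ)..x, rd f t = f x - f 0 := by
  rcases le_total 0 x with hx | hx
  · exact ftc_rd hconv hmono hx
  · rw [intervalIntegral.integral_symm, ftc_rd hconv hmono hx]
    ring

lemma hN_eq (n : ℕ) {x : ℝ} (hx : x ≤ (n:ℝ)) : hN f n x = f x := by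
  have hcongr : ∫ t in (0:ℝ)..x, phiN f n t = ∫ t in (0:ℝ)..x, rd f t := by
    apply intervalIntegral.integral_congr
    intro t ht
    have ht' : t ≤ (n:ℝ) := by
      rcases le_total 0 x with h | h
      · rw [uIcc_of_le h] at ht
        exact le_trans ht.2 hx
      · rw [uIcc_of_ge h] at ht
        exact le_trans ht.2 (le_trans (Nat.cast_nonneg n) le_rfl)
    exact min_eq_left (rd_mono hconv hmono ht')
  simp only [hN]
  rw [hcongr, intRd_eq hconv hmono]
  ring

lemma hN_mono (n : ℕ) : Monotone (hN f n) := by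
  intro x y hxy
  have h := hN_diff hconv hmono n x y
  have h2 : 0 ≤ ∫ t in x..y, phiN f n t :=
    intervalIntegral.integral_nonneg hxy (fun t _ => phiN_nonneg hconv hmono n t)
  linarith

lemma hN_le_f (n : ℕ) (x : ℝ) : hN f n x ≤ f x := by
  rcases le_total x (n:ℝ) with hx | hx
  · exact le_of_eq (hN_eq hconv hmono n hx)
  · have hn0 : (0:ℝ) ≤ (n:ℝ) := Nat.cast_nonneg n
    have h0x : (0:ℝ) ≤ x := le_trans hn0 hx
    have : ∫ t in (0:ℝ)..x, phiN f n t ≤ ∫ t in (0:ℝ)..x, rd f t := by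
      apply intervalIntegral.integral_mono_on h0x (phiN_intInt hconv hmono n 0 x)
        ((rd_mono hconv hmono).intervalIntegrable)
      intro t _
      exact phiN_le_rd hconv hmono n t
    have h2 := intRd_eq hconv hmono (f := f) x
    simp only [hN]
    linarith

lemma hN_ge (n : ℕ) (x : ℝ) : f (min x 0) ≤ hN f n x := by
  rcases le_total x 0 with hx | hx
  · rw [min_eq_left hx]
    exact le_of_eq (hN_eq hconv hmono n (le_trans hx (Nat.cast_nonneg n))).symm
  · rw [min_eq_right hx]
    have h0 : hN f n 0 = f 0 := hN_eq hconv hmono n (Nat.cast_nonneg n)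
    rw [← h0]
    exact hN_mono hconv hmono n hx

lemma hN_abs_le (n : ℕ) (x : ℝ) : |hN f n x| ≤ |f x| + |f 0| := by
  rw [abs_le]
  constructor
  · have h := hN_ge hconv hmono n x
    rcases le_total x 0 with hx | hx
    · rw [min_eq_left hx] at h
      have := neg_abs_le (f x)
      have h0 := abs_nonneg (f 0)
      linarith
    · rw [min_eq_right hx] at h
      have := neg_abs_le (f 0)
      have h0 := abs_nonneg (f x)
      linarith
  · have h := hN_le_f hconv hmono n x
    have := le_abs_self (f x)
    have h0 := abs_nonneg (f 0)
    linarith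

lemma hN_cont (n : ℕ) : Continuous (hN f n) := by
  have hbd : ∀ x y : ℝ, x ≤ y → hN f n y - hN f n x ≤ rd f (n:ℝ) * (y - x) := by
    intro x y hxy
    rw [hN_diff hconv hmono n x y]
    have : ∫ t in x..y, phiN f n t ≤ ∫ t in x..y, rd f (n:ℝ) := by
      apply intervalIntegral.integral_mono_on hxy (phiN_intInt hconv hmono n x y)
        (intervalIntegrable_const)
      intro t _
      exact phiN_le_cap hconv hmono n t
    rw [intervalIntegral.integral_const, smul_eq_mul, mul_comm] at this
    exact this
  rw [Metric.continuous_iff]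
  intro x ε hε
  have hL1 : 0 < rd f (n:ℝ) + 1 := by have := rd_nonneg hconv hmono (n:ℝ); linarith
  refine ⟨ε / (rd f (n:ℝ) + 1), by positivity, fun y hy => ?_⟩
  rw [Real.dist_eq] at hy ⊢
  have habs : |hN f n y - hN f n x| ≤ (rd f (n:ℝ) + 1) * |y - x| := by
    rcases le_total x y with hxy | hxy
    · have h1 := hbd x y hxy
      have h2 : 0 ≤ hN f n y - hN f n x := by linarith [hN_mono hconv hmono n hxy]
      rw [abs_of_nonneg h2, abs_of_nonneg (by linarith : (0:ℝ) ≤ y - x)]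
      nlinarith [rd_nonneg hconv hmono (n:ℝ)]
    · have h1 := hbd y x hxy
      have h2 : 0 ≤ hN f n x - hN f n y := by linarith [hN_mono hconv hmono n hxy]
      rw [abs_sub_comm, abs_sub_comm y x, abs_of_nonneg h2,
        abs_of_nonneg (by linarith : (0:ℝ) ≤ x - y)]
      nlinarith [rd_nonneg hconv hmono (n:ℝ)]
  calc |hN f n y - hN f n x| ≤ (rd f (n:ℝ) + 1) * |y - x| := habs
    _ < (rd f (n:ℝ) + 1) * (ε / (rd f (n:ℝ) + 1)) := by
        apply mul_lt_mul_of_pos_left hy hL1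
    _ = ε := by field_simp

end HN

section Core

/-- `IsCDF`-like bundle (local copy to keep this namespace self-contained). -/
def IsCDF' (F : ℝ → ℝ) : Prop :=
  Monotone F ∧ (∀ y, ContinuousWithinAt F (Set.Ici y) y) ∧
    Tendsto F atBot (nhds 0) ∧ Tendsto F atTop (nhds 1)

theorem core
    {Ω : Type*} [MeasurableSpace Ω] (μ : Measure Ω) [IsProbabilityMeasure μ]
    (U Y1 : Ω → ℝ) (F0 F1 : ℝ → ℝ)
    (hF0 : IsCDF' F0) (hF1 : IsCDF' F1)
    (hU : Measurable U) (hUlaw : μ.map U = volume.restrict (Set.Ioo (0:ℝ) 1))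
    (hY1 : Measurable Y1) (hY1law : ∀ y, μ {ω | Y1 ω ≤ y} = ENNReal.ofReal (F1 y))
    (a b : ℝ) (ha : 0 ≤ a) (hab : a < b) (hb : b ≤ 1)
    (φ h : ℝ → ℝ) (hφ_mono : Monotone φ) (hφ0 : ∀ t, 0 ≤ φ t) (L : ℝ) (hφL : ∀ t, φ t ≤ L)
    (hh_mono : Monotone h) (hh_cont : Continuous h)
    (hdiff : ∀ x y : ℝ, h y - h x = ∫ t in x..y, φ t)
    (hHY : IntegrableOn (fun ω => h (Y1 ω - quantI F0 (U ω))) (U ⁻¹' Ioo a b) μ)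
    (hHg : IntegrableOn (fun u => h (quantI F1 (u - a) - quantI F0 u)) (Ioo a b) volume) :
    ∫ u in Ioo a b, h (quantI F1 (u - a) - quantI F0 u) ≤
      ∫ ω in U ⁻¹' Ioo a b, h (Y1 ω - quantI F0 (U ω)) ∂μ := by
  obtain ⟨hF0m, hF0rc, hF0bot, hF0top⟩ := hF0
  obtain ⟨hF1m, hF1rc, hF1bot, hF1top⟩ := hF1
  set A : Set Ω := U ⁻¹' Ioo a b with hAdef
  have hAmeas : MeasurableSet A := hU measurableSet_Ioo
  set c : ℝ := b - a with hcdef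
  have hc0 : 0 < c := by simp [hcdef]; linarith
  have hsub01 : Ioo a b ⊆ Ioo (0:ℝ) 1 := Ioo_subset_Ioo ha hb
  -- quantile functions
  set q0 : ℝ → ℝ := quantI F0 with hq0def
  set q1 : ℝ → ℝ := quantI F1 with hq1def
  have hq0meas : Measurable q0 := measurable_quantI hF0m hF0bot hF0top
  have hq1meas : Measurable q1 := measurable_quantI hF1m hF1bot hF1top
  have hq0mono : MonotoneOn (quant F0) (Ioo (0:ℝ) 1) := quant_monotoneOn hF0m hF0bot hF0top
  have hgal : ∀ v ∈ Ioo (0:ℝ) 1, ∀ t : ℝ, quant F1 v ≤ t ↔ v ≤ F1 t :=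
    fun v hv t => quant_galois hF1m hF1rc hF1bot hF1top hv.1 hv.2 t
  have hF1nonneg : ∀ t, 0 ≤ F1 t := cdf_nonneg hF1m hF1bot
  -- main random variables
  set T : Ω → ℝ := fun ω => q1 (U ω - a) with hTdef
  set Z : Ω → ℝ := fun ω => q0 (U ω) with hZdef
  have hTmeas : Measurable T := hq1meas.comp (hU.sub measurable_const)
  have hZmeas : Measurable Z := hq0meas.comp hU
  have hF1meas : Measurable F1 := hF1m.measurable
  -- the support of the dual density
  set E : Set ℝ := {t | 0 < F1 t ∧ F1 t < c} with hEdef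
  have hEmeas : MeasurableSet E :=
    (measurableSet_lt measurable_const hF1meas).inter (measurableSet_lt hF1meas measurable_const)
  set κ : ℝ → ℝ := E.indicator (fun t => φ (t - q0 (a + F1 t))) with hκdef
  have hκmeas : Measurable κ :=
    Measurable.indicator (hφ_mono.measurable.comp
      (measurable_id.sub (hq0meas.comp (measurable_const.add hF1meas)))) hEmeas
  have hκ0 : ∀ t, 0 ≤ κ t := by
    intro t
    by_cases ht : t ∈ E
    · rw [hκdef, Set.indicator_of_mem ht]; exact hφ0 _
    · rw [hκdef, Set.indicator_of_notMem ht]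
  have hL0 : 0 ≤ L := le_trans (hφ0 0) (hφL 0)
  have hκL : ∀ t, κ t ≤ L := by
    intro t
    by_cases ht : t ∈ E
    · rw [hκdef, Set.indicator_of_mem ht]; exact hφL _
    · rw [hκdef, Set.indicator_of_notMem ht]; exact hL0
  have hκE : ∀ t ∉ E, κ t = 0 := fun t ht => Set.indicator_of_notMem ht _
  -- basic membership facts on A
  have hmemA : ∀ ω ∈ A, U ω ∈ Ioo a b := fun ω hω => hω
  have hu01 : ∀ ω ∈ A, U ω ∈ Ioo (0:ℝ) 1 := fun ω hω => hsub01 hω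
  have hua01 : ∀ ω ∈ A, U ω - a ∈ Ioo (0:ℝ) 1 := by
    intro ω hω
    have h1 := (hmemA ω hω).1
    have h2 := (hmemA ω hω).2
    constructor
    · linarith
    · have hc1 : c ≤ 1 := by rw [hcdef]; linarith
      rw [hcdef] at hc1
      linarith
  -- pushforward of the restricted measure
  have hmapA : (μ.restrict A).map U = volume.restrict (Ioo a b) := by
    rw [hAdef, ← Measure.restrict_map hU measurableSet_Ioo, hUlaw,
      Measure.restrict_restrict measurableSet_Ioo, inter_eq_self_of_subset_left hsub01]
  -- the key measure computation
  have hTt : ∀ t ∈ E, A ∩ {ω | T ω ≤ t} = U ⁻¹' Ioc a (a + F1 t) := by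
    intro t ht
    ext ω
    simp only [mem_inter_iff, mem_preimage, mem_Ioo, mem_Ioc, mem_setOf_eq, hAdef]
    constructor
    · rintro ⟨⟨h1, h2⟩, h3⟩
      have hva : U ω - a ∈ Ioo (0:ℝ) 1 := ⟨by linarith, by linarith⟩
      rw [hTdef] at h3
      simp only at h3
      rw [hq1def, quantI_eq _ hva] at h3
      have := (hgal _ hva t).mp h3
      exact ⟨h1, by linarith⟩
    · rintro ⟨h1, h2⟩
      have hFtc : F1 t < c := ht.2
      have hub : U ω < b := by
        have : a + F1 t < b := by simp only [hcdef] at hFtc; linarith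
        linarith
      have hva : U ω - a ∈ Ioo (0:ℝ) 1 := ⟨by linarith, by linarith⟩
      refine ⟨⟨h1, hub⟩, ?_⟩
      show T ω ≤ t
      rw [hTdef]
      simp only
      rw [hq1def, quantI_eq _ hva]
      exact (hgal _ hva t).mpr (by linarith)
  have hkey : ∀ t ∈ E, μ (A ∩ {ω | T ω ≤ t}) = ENNReal.ofReal (F1 t) := by
    intro t ht
    rw [hTt t ht, ← Measure.map_apply hU measurableSet_Ioc, hUlaw,
      Measure.restrict_apply measurableSet_Ioc]
    have hsub : Ioc a (a + F1 t) ∩ Ioo 0 1 = Ioc a (a + F1 t) := by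
      apply inter_eq_self_of_subset_left
      intro x hx
      have h1 : a < x := hx.1
      have h2 : x ≤ a + F1 t := hx.2
      have h3 : F1 t < c := ht.2
      constructor
      · linarith
      · simp only [hcdef] at h3; linarith
    rw [hsub, Real.volume_Ioc]
    congr 1
    ring
  -- the null set of bad outcomes
  set Nbad : Set Ω := ⋃ (q : ℚ), {ω | Y1 ω < (q:ℝ) ∧ F1 q ≤ 0} with hNdef
  have hNbad : μ Nbad = 0 := by
    rw [hNdef]
    refine measure_iUnion_null fun q => ?_
    by_cases hq : F1 q ≤ 0
    · have h0 : μ {ω | Y1 ω ≤ (q:ℝ)} = 0 := by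
        rw [hY1law]
        have : F1 (q:ℝ) = 0 := le_antisymm hq (hF1nonneg q)
        simp [this]
      exact measure_mono_null (fun ω hω => le_of_lt hω.1) h0
    · have : {ω | Y1 ω < (q:ℝ) ∧ F1 q ≤ 0} = ∅ := by
        ext ω; simp [hq]
      simp [this]
  have hF1posOfGood : ∀ ω, ω ∉ Nbad → ∀ t, Y1 ω < t → 0 < F1 t := by
    intro ω hω t hlt
    obtain ⟨q, hq1, hq2⟩ := exists_rat_btwn hlt
    by_cases hq : F1 q ≤ 0
    · have hmem : ω ∈ {ω' | Y1 ω' < (q:ℝ) ∧ F1 q ≤ 0} := ⟨hq1, hq⟩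
      exact absurd (mem_iUnion.mpr ⟨q, hmem⟩) hω
    · push_neg at hq
      exact lt_of_lt_of_le hq (hF1m hq2.le)
  -- integrability of untruncated difference
  have hgmeas : Measurable (fun u : ℝ => h (q1 (u - a) - q0 u)) :=
    hh_cont.measurable.comp ((hq1meas.comp (measurable_id.sub measurable_const)).sub hq0meas)
  have hHT : Integrable (fun ω => h (T ω - Z ω)) (μ.restrict A) := by
    have h1 : Integrable (fun u => h (q1 (u - a) - q0 u)) ((μ.restrict A).map U) := by
      rw [hmapA]; exact hHg
    exact (integrable_map_measure hgmeas.aestronglyMeasurable hU.aemeasurable).mp h1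
  have hHYint : Integrable (fun ω => h (Y1 ω - Z ω)) (μ.restrict A) := hHY
  have hGfull_int : Integrable (fun ω => h (Y1 ω - Z ω) - h (T ω - Z ω)) (μ.restrict A) :=
    hHYint.sub hHT
  have hκint : ∀ x y : ℝ, IntegrableOn κ (Ico x y) volume := by
    intro x y
    refine Integrable.mono'
      ((integrableOn_const_iff).mpr (Or.inr measure_Ico_lt_top) : IntegrableOn (fun _ => L) _ _)
      hκmeas.aestronglyMeasurable.restrict ?_
    refine Eventually.of_forall fun t => ?_
    rw [Real.norm_eq_abs, abs_of_nonneg (hκ0 t)]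
    exact hκL t
  -- the per-truncation inequality
  have hM : ∀ M : ℕ, (0:ℝ) ≤ ∫ ω in A,
      (h (max (min (Y1 ω) (M:ℝ)) (-(M:ℝ)) - Z ω)
        - h (max (min (T ω) (M:ℝ)) (-(M:ℝ)) - Z ω)) ∂μ := by
    intro M
    set MM : ℝ := (M:ℝ) with hMMdef
    have hMM : 0 ≤ MM := Nat.cast_nonneg M
    set TM : Ω → ℝ := fun ω => max (min (T ω) MM) (-MM) with hTMdef
    set yM : Ω → ℝ := fun ω => max (min (Y1 ω) MM) (-MM) with hyMdef
    have hclcont : Continuous (fun x : ℝ => max (min x MM) (-MM)) :=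
      (continuous_id.min continuous_const).max continuous_const
    have hTMmeas : Measurable TM := hclcont.measurable.comp hTmeas
    have hyMmeas : Measurable yM := hclcont.measurable.comp hY1
    have hTMlb : ∀ ω, -MM ≤ TM ω := fun ω => le_max_right _ _
    have hTMub : ∀ ω, TM ω ≤ MM := fun ω => max_le (min_le_right _ _) (by linarith)
    have hyMlb : ∀ ω, -MM ≤ yM ω := fun ω => le_max_right _ _
    have hyMub : ∀ ω, yM ω ≤ MM := fun ω => max_le (min_le_right _ _) (by linarith)
    set PM : Ω → ℝ := fun ω => ∫ t, (Ico (TM ω) (yM ω)).indicator κ t with hPMdef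
    set NM : Ω → ℝ := fun ω => ∫ t, (Ico (yM ω) (TM ω)).indicator κ t with hNMdef
    set GM : Ω → ℝ := fun ω => h (yM ω - Z ω) - h (TM ω - Z ω) with hGMdef
    -- measurability of PM/NM type functions
    have hmeasPN : ∀ (V W : Ω → ℝ), Measurable V → Measurable W →
        Measurable (fun ω => ∫ t, (Ico (V ω) (W ω)).indicator κ t) := by
      intro V W hV hW
      have hset : MeasurableSet {p : Ω × ℝ | V p.1 ≤ p.2 ∧ p.2 < W p.1} :=
        (measurableSet_le (hV.comp measurable_fst) measurable_snd).inter
          (measurableSet_lt measurable_snd (hW.comp measurable_fst))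
      have heq : (fun p : Ω × ℝ => ((Ico (V p.1) (W p.1)).indicator κ) p.2)
          = {p : Ω × ℝ | V p.1 ≤ p.2 ∧ p.2 < W p.1}.indicator (fun p => κ p.2) := by
        funext p
        simp [Set.indicator_apply, mem_Ico, mem_setOf_eq]
      have hjoint : StronglyMeasurable (fun p : Ω × ℝ => ((Ico (V p.1) (W p.1)).indicator κ) p.2) := by
        rw [heq]
        exact ((hκmeas.comp measurable_snd).indicator hset).stronglyMeasurable
      exact hjoint.integral_prod_right'.measurable
    have hPMmeas : Measurable PM := hmeasPN TM yM hTMmeas hyMmeas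
    have hNMmeas : Measurable NM := hmeasPN yM TM hyMmeas hTMmeas
    -- bounds for PM/NM type functions
    have hboundPN : ∀ (V W : Ω → ℝ), (∀ ω, -MM ≤ V ω) → (∀ ω, W ω ≤ MM) → ∀ ω,
        (0:ℝ) ≤ (∫ t, (Ico (V ω) (W ω)).indicator κ t) ∧
          (∫ t, (Ico (V ω) (W ω)).indicator κ t) ≤ L * (2 * MM) := by
      intro V W hVlb hWub ω
      constructor
      · apply integral_nonneg
        intro t
        exact Set.indicator_nonneg (fun s _ => hκ0 s) t
      · have hle : ∀ t, (Ico (V ω) (W ω)).indicator κ t ≤ (Icc (-MM) MM).indicator (fun _ => L) t := by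
          intro t
          by_cases ht : t ∈ Ico (V ω) (W ω)
          · rw [Set.indicator_of_mem ht, Set.indicator_of_mem]
            · exact hκL t
            · exact ⟨le_trans (hVlb ω) ht.1, le_trans ht.2.le (hWub ω)⟩
          · rw [Set.indicator_of_notMem ht]
            exact Set.indicator_nonneg (fun _ _ => hL0) t
        have hint1 : Integrable ((Ico (V ω) (W ω)).indicator κ) volume :=
          (integrable_indicator_iff measurableSet_Ico).mpr (hκint _ _)
        have hint2 : Integrable ((Icc (-MM) MM).indicator (fun _ => L)) volume :=
          (integrable_indicator_iff measurableSet_Icc).mpr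
            ((integrableOn_const_iff).mpr (Or.inr measure_Icc_lt_top))
        calc (∫ t, (Ico (V ω) (W ω)).indicator κ t)
            ≤ ∫ t, (Icc (-MM) MM).indicator (fun _ => L) t := integral_mono hint1 hint2 hle
          _ = L * (2 * MM) := by
              rw [integral_indicator measurableSet_Icc, setIntegral_const, Real.volume_real_Icc_of_le (by linarith),
                smul_eq_mul]
              ring
    have hPMint : Integrable PM (μ.restrict A) := by
      refine Integrable.mono' (integrable_const (L * (2 * MM)))
        hPMmeas.aestronglyMeasurable ?_
      refine Eventually.of_forall fun ω => ?_
      rw [Real.norm_eq_abs, abs_of_nonneg (hboundPN TM yM hTMlb hyMub ω).1]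
      exact (hboundPN TM yM hTMlb hyMub ω).2
    have hNMint : Integrable NM (μ.restrict A) := by
      refine Integrable.mono' (integrable_const (L * (2 * MM)))
        hNMmeas.aestronglyMeasurable ?_
      refine Eventually.of_forall fun ω => ?_
      rw [Real.norm_eq_abs, abs_of_nonneg (hboundPN yM TM hyMlb hTMub ω).1]
      exact (hboundPN yM TM hyMlb hTMub ω).2
    -- GM integrable
    have hGMmeas : Measurable GM :=
      (hh_cont.measurable.comp (hyMmeas.sub hZmeas)).sub
        (hh_cont.measurable.comp (hTMmeas.sub hZmeas))
    have hGMbound : ∀ ω, |GM ω| ≤ |h (Y1 ω - Z ω) - h (T ω - Z ω)| := by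
      intro ω
      exact clamp_abs_le (H := fun x => h (x - Z ω))
        (fun x y hxy => hh_mono (by linarith)) hMM (T ω) (Y1 ω)
    have hGMint : Integrable GM (μ.restrict A) := by
      refine Integrable.mono' hGfull_int.abs hGMmeas.aestronglyMeasurable ?_
      refine Eventually.of_forall fun ω => ?_
      rw [Real.norm_eq_abs]
      exact hGMbound ω
    -- pointwise comparison
    have hφz_int : ∀ (z x y : ℝ), IntegrableOn (fun t => φ (t - z)) (Ioo x y) volume := by
      intro z x y
      have hmz : Monotone (fun t => φ (t - z)) := fun s t hst => hφ_mono (by linarith)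
      exact (hmz.intervalIntegrable (a := x) (b := y)).1.mono_set Ioo_subset_Ioc_self
    have hptwise : ∀ᵐ ω ∂(μ.restrict A), PM ω - NM ω ≤ GM ω := by
      have hae1 : ∀ᵐ ω ∂(μ.restrict A), ω ∈ A := ae_restrict_mem hAmeas
      have hae2 : ∀ᵐ ω ∂(μ.restrict A), ω ∉ Nbad := by
        apply ae_restrict_of_ae
        rw [ae_iff]
        simpa [not_not] using hNbad
      filter_upwards [hae1, hae2] with ω hωA hωN
      have huab := hmemA ω hωA
      have hu01' := hu01 ω hωA
      have hua01' := hua01 ω hωA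
      have hTω : T ω = quant F1 (U ω - a) := by
        rw [hTdef]; simp only; rw [hq1def, quantI_eq _ hua01']
      have hZω : Z ω = quant F0 (U ω) := by
        rw [hZdef]; simp only; rw [hq0def, quantI_eq _ hu01']
      rcases le_total (T ω) (Y1 ω) with hYT | hYT
      · -- comonotone side: N part vanishes
        have hclTY : TM ω ≤ yM ω := clamp_mono MM hYT
        have hNM0 : NM ω = 0 := by
          rw [hNMdef]; simp only
          rw [Set.Ico_eq_empty (not_lt.mpr hclTY)]
          simp
        have hGM : GM ω = ∫ t in Ioo (TM ω) (yM ω), φ (t - Z ω) := by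
          rw [hGMdef]; simp only
          rw [hdiff (TM ω - Z ω) (yM ω - Z ω),
            ← intervalIntegral.integral_comp_sub_right (fun t => φ t) (Z ω),
            intervalIntegral.integral_of_le hclTY, MeasureTheory.integral_Ioc_eq_integral_Ioo]
        have hPM : PM ω = ∫ t in Ioo (TM ω) (yM ω), κ t := by
          rw [hPMdef]; simp only
          rw [integral_indicator measurableSet_Ico, MeasureTheory.integral_Ico_eq_integral_Ioo]
        rw [hNM0, hPM, hGM, sub_zero]
        apply setIntegral_mono_on ((hκint (TM ω) (yM ω)).mono_set Ioo_subset_Ico_self)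
          (hφz_int (Z ω) (TM ω) (yM ω)) measurableSet_Ioo
        intro t ht
        by_cases htE : t ∈ E
        · -- live branch
          have hTt' : T ω ≤ t := by
            rcases le_total (T ω) MM with hTM' | hTM'
            · have h1 : T ω ≤ TM ω := by
                rw [hTMdef]; simp only
                rw [min_eq_left hTM']
                exact le_max_left _ _
              linarith [ht.1]
            · exfalso
              have h1 : TM ω = MM := by
                rw [hTMdef]; simp only
                rw [min_eq_right hTM']
                exact max_eq_left (by linarith)
              have h2 : yM ω ≤ MM := hyMub ω
              have := ht.1
              have := ht.2
              linarith
          have hQ1le : quant F1 (U ω - a) ≤ t := by rw [← hTω]; exact hTt'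
          have hFua : U ω - a ≤ F1 t := (hgal _ hua01' t).mp hQ1le
          have haF1 : a + F1 t ∈ Ioo (0:ℝ) 1 := by
            constructor
            · have := htE.1; linarith
            · have h2 : F1 t < c := htE.2
              rw [hcdef] at h2; linarith
          have hκt : κ t = φ (t - quant F0 (a + F1 t)) := by
            rw [hκdef, Set.indicator_of_mem htE]
            rw [hq0def, quantI_eq _ haF1]
          rw [hκt, hZω]
          apply hφ_mono
          have hle := hq0mono hu01' haF1 (by linarith)
          linarith
        · rw [hκE t htE]
          have := hφ0 (t - Z ω)
          linarith
      · -- anticomonotone side: P part vanishes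
        have hclYT : yM ω ≤ TM ω := clamp_mono MM hYT
        have hPM0 : PM ω = 0 := by
          rw [hPMdef]; simp only
          rw [Set.Ico_eq_empty (not_lt.mpr hclYT)]
          simp
        have hGM : GM ω = - ∫ t in Ioo (yM ω) (TM ω), φ (t - Z ω) := by
          rw [hGMdef]; simp only
          rw [hdiff (TM ω - Z ω) (yM ω - Z ω), intervalIntegral.integral_symm,
            ← intervalIntegral.integral_comp_sub_right (fun t => φ t) (Z ω),
            intervalIntegral.integral_of_le hclYT, MeasureTheory.integral_Ioc_eq_integral_Ioo]
        have hNM : NM ω = ∫ t in Ioo (yM ω) (TM ω), κ t := by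
          rw [hNMdef]; simp only
          rw [integral_indicator measurableSet_Ico, MeasureTheory.integral_Ico_eq_integral_Ioo]
        rw [hPM0, hNM, hGM, zero_sub, neg_le_neg_iff]
        apply setIntegral_mono_on (hφz_int (Z ω) (yM ω) (TM ω))
          ((hκint (yM ω) (TM ω)).mono_set Ioo_subset_Ico_self) measurableSet_Ioo
        intro t ht
        -- t < T ω
        have htT : t < T ω := by
          rcases le_total (-MM) (min (T ω) MM) with hTM' | hTM'
          · have h1 : TM ω = min (T ω) MM := by
              rw [hTMdef]; simp only
              exact max_eq_left hTM'
            have := ht.2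
            rw [h1] at this
            exact lt_of_lt_of_le this (min_le_left _ _)
          · exfalso
            have h1 : TM ω = -MM := by
              rw [hTMdef]; simp only
              exact max_eq_right hTM'
            have h2 := hyMlb ω
            have := ht.1
            have := ht.2
            linarith
        -- Y1 ω < t
        have htY : Y1 ω < t := by
          rcases le_total (Y1 ω) MM with hYM' | hYM'
          · have h1 : Y1 ω ≤ yM ω := by
              rw [hyMdef]; simp only
              rw [min_eq_left hYM']
              exact le_max_left _ _
            have := ht.1
            linarith
          · exfalso
            have h1 : yM ω = MM := by
              rw [hyMdef]; simp only
              rw [min_eq_right hYM']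
              exact max_eq_left (by linarith)
            have h2 := hTMub ω
            have := ht.1
            have := ht.2
            linarith
        have hF1pos : 0 < F1 t := hF1posOfGood ω hωN t htY
        have hFlt : F1 t < U ω - a := by
          by_contra hcon
          push_neg at hcon
          have : quant F1 (U ω - a) ≤ t := (hgal _ hua01' t).mpr hcon
          rw [← hTω] at this
          linarith
        have htE : t ∈ E := by
          refine ⟨hF1pos, ?_⟩
          rw [hcdef]
          have := huab.2
          linarith
        have haF1 : a + F1 t ∈ Ioo (0:ℝ) 1 := by
          constructor
          · linarith
          · have := huab.2; linarith
        have hκt : κ t = φ (t - quant F0 (a + F1 t)) := by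
          rw [hκdef, Set.indicator_of_mem htE]
          rw [hq0def, quantI_eq _ haF1]
        rw [hκt, hZω]
        apply hφ_mono
        have hle := hq0mono haF1 hu01' (by linarith)
        linarith
    -- the rearrangement (Hardy–Littlewood) step: ∫ NM ≤ ∫ PM
    have hswap : ∀ (V W : Ω → ℝ), Measurable V → Measurable W →
        ∫⁻ ω, ENNReal.ofReal (∫ t, (Ico (V ω) (W ω)).indicator κ t) ∂(μ.restrict A)
          = ∫⁻ t, ENNReal.ofReal (κ t) * (μ.restrict A) {ω | V ω ≤ t ∧ t < W ω} := by
      intro V W hV hW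
      have hstep1 : ∀ ω, ENNReal.ofReal (∫ t, (Ico (V ω) (W ω)).indicator κ t)
          = ∫⁻ t, ENNReal.ofReal ((Ico (V ω) (W ω)).indicator κ t) := by
        intro ω
        apply MeasureTheory.ofReal_integral_eq_lintegral_ofReal
        · exact (integrable_indicator_iff measurableSet_Ico).mpr (hκint _ _)
        · exact Eventually.of_forall fun t => Set.indicator_nonneg (fun s _ => hκ0 s) t
      simp_rw [hstep1]
      rw [lintegral_lintegral_swap]
      · apply lintegral_congr
        intro t
        have heq : ∀ ω, ENNReal.ofReal ((Ico (V ω) (W ω)).indicator κ t)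
            = ({ω' | V ω' ≤ t ∧ t < W ω'}).indicator (fun _ => ENNReal.ofReal (κ t)) ω := by
          intro ω
          by_cases hmem : V ω ≤ t ∧ t < W ω
          · rw [Set.indicator_of_mem (show t ∈ Ico (V ω) (W ω) from hmem),
              Set.indicator_of_mem (show ω ∈ {ω' | V ω' ≤ t ∧ t < W ω'} from hmem)]
          · rw [Set.indicator_of_notMem (show t ∉ Ico (V ω) (W ω) from hmem),
              Set.indicator_of_notMem (show ω ∉ {ω' | V ω' ≤ t ∧ t < W ω'} from hmem)]
            exact ENNReal.ofReal_zero
        simp_rw [heq]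
        rw [lintegral_indicator (show MeasurableSet {ω' | V ω' ≤ t ∧ t < W ω'} from
          (measurableSet_le hV measurable_const).inter (measurableSet_lt measurable_const hW))]
        rw [setLIntegral_const]
      · apply Measurable.aemeasurable
        have hset : MeasurableSet {p : Ω × ℝ | V p.1 ≤ p.2 ∧ p.2 < W p.1} :=
          (measurableSet_le (hV.comp measurable_fst) measurable_snd).inter
            (measurableSet_lt measurable_snd (hW.comp measurable_fst))
        have heq2 : (Function.uncurry fun ω t => ENNReal.ofReal ((Ico (V ω) (W ω)).indicator κ t))
            = fun p : Ω × ℝ =>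
              ENNReal.ofReal ({p : Ω × ℝ | V p.1 ≤ p.2 ∧ p.2 < W p.1}.indicator (fun q => κ q.2) p) := by
          funext p
          simp [Function.uncurry, Set.indicator_apply, mem_Ico, mem_setOf_eq]
        rw [heq2]
        exact ENNReal.measurable_ofReal.comp ((hκmeas.comp measurable_snd).indicator hset)
    have hslice : ∀ t, ENNReal.ofReal (κ t) * (μ.restrict A) {ω | yM ω ≤ t ∧ t < TM ω}
        ≤ ENNReal.ofReal (κ t) * (μ.restrict A) {ω | TM ω ≤ t ∧ t < yM ω} := by
      intro t
      by_cases htE : t ∈ E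
      · have key0 : (μ.restrict A) {ω | yM ω ≤ t} ≤ (μ.restrict A) {ω | TM ω ≤ t} := by
          rcases lt_or_ge t (-MM) with ht1 | ht1
          · have hempty : {ω | yM ω ≤ t} = ∅ := by
              ext ω
              simp only [mem_setOf_eq, mem_empty_iff_false, iff_false, not_le]
              exact lt_of_lt_of_le ht1 (hyMlb ω)
            rw [hempty]
            simp
          rcases le_or_gt MM t with ht2 | ht2
          · have huniv : {ω | TM ω ≤ t} = univ := by
              ext ω
              simp only [mem_setOf_eq, mem_univ, iff_true]
              exact le_trans (hTMub ω) ht2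
            rw [huniv]
            exact measure_mono (subset_univ _)
          · have hTset : {ω | TM ω ≤ t} = {ω | T ω ≤ t} := by
              ext ω
              simp only [hTMdef, mem_setOf_eq]
              constructor
              · intro hle
                have h1 : min (T ω) MM ≤ t := le_trans (le_max_left _ _) hle
                rcases min_cases (T ω) MM with ⟨heq, _⟩ | ⟨heq, _⟩
                · rwa [heq] at h1
                · rw [heq] at h1; linarith
              · intro hle
                exact max_le (le_trans (min_le_left _ _) hle) ht1
            have hYset : {ω | yM ω ≤ t} = {ω | Y1 ω ≤ t} := by
              ext ω
              simp only [hyMdef, mem_setOf_eq]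
              constructor
              · intro hle
                have h1 : min (Y1 ω) MM ≤ t := le_trans (le_max_left _ _) hle
                rcases min_cases (Y1 ω) MM with ⟨heq, _⟩ | ⟨heq, _⟩
                · rwa [heq] at h1
                · rw [heq] at h1; linarith
              · intro hle
                exact max_le (le_trans (min_le_left _ _) hle) ht1
            rw [hTset, hYset]
            have hY : (μ.restrict A) {ω | Y1 ω ≤ t} ≤ ENNReal.ofReal (F1 t) := by
              rw [Measure.restrict_apply (measurableSet_le hY1 measurable_const), ← hY1law t]
              exact measure_mono inter_subset_left
            have hT : (μ.restrict A) {ω | T ω ≤ t} = ENNReal.ofReal (F1 t) := by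
              rw [Measure.restrict_apply (measurableSet_le hTmeas measurable_const), inter_comm]
              exact hkey t htE
            rw [hT]
            exact hY
        -- cancellation of the common part
        have hmy : MeasurableSet {ω | yM ω ≤ t} := measurableSet_le hyMmeas measurable_const
        have hmT : MeasurableSet {ω | TM ω ≤ t} := measurableSet_le hTMmeas measurable_const
        have hseteq1 : {ω | TM ω ≤ t} \ {ω | yM ω ≤ t} = {ω | TM ω ≤ t ∧ t < yM ω} := by
          ext ω
          simp only [mem_diff, mem_setOf_eq, not_le]
        have hseteq2 : {ω | yM ω ≤ t} \ {ω | TM ω ≤ t} = {ω | yM ω ≤ t ∧ t < TM ω} := by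
          ext ω
          simp only [mem_diff, mem_setOf_eq, not_le]
        have hdec1 : (μ.restrict A) {ω | TM ω ≤ t}
            = (μ.restrict A) ({ω | TM ω ≤ t} ∩ {ω | yM ω ≤ t})
              + (μ.restrict A) {ω | TM ω ≤ t ∧ t < yM ω} := by
          rw [← hseteq1]
          exact (measure_inter_add_diff _ hmy).symm
        have hdec2 : (μ.restrict A) {ω | yM ω ≤ t}
            = (μ.restrict A) ({ω | TM ω ≤ t} ∩ {ω | yM ω ≤ t})
              + (μ.restrict A) {ω | yM ω ≤ t ∧ t < TM ω} := by
          rw [← hseteq2, inter_comm {ω | TM ω ≤ t}]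
          exact (measure_inter_add_diff _ hmT).symm
        have hcancel : (μ.restrict A) {ω | yM ω ≤ t ∧ t < TM ω}
            ≤ (μ.restrict A) {ω | TM ω ≤ t ∧ t < yM ω} := by
          have hfin : (μ.restrict A) ({ω | TM ω ≤ t} ∩ {ω | yM ω ≤ t}) ≠ ⊤ :=
            measure_ne_top _ _
          rw [hdec1, hdec2] at key0
          exact (ENNReal.add_le_add_iff_left hfin).mp key0
        exact mul_le_mul_right hcancel _
      · rw [hκE t htE]
        simp
    have hC : ∫ ω, NM ω ∂(μ.restrict A) ≤ ∫ ω, PM ω ∂(μ.restrict A) := by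
      rw [integral_eq_lintegral_of_nonneg_ae
          (Eventually.of_forall fun ω => (hboundPN yM TM hyMlb hTMub ω).1)
          hNMmeas.aestronglyMeasurable,
        integral_eq_lintegral_of_nonneg_ae
          (Eventually.of_forall fun ω => (hboundPN TM yM hTMlb hyMub ω).1)
          hPMmeas.aestronglyMeasurable]
      apply ENNReal.toReal_mono
      · -- finiteness of the PM lintegral
        have hb : ∫⁻ ω, ENNReal.ofReal (PM ω) ∂(μ.restrict A)
            ≤ ∫⁻ _, ENNReal.ofReal (L * (2 * MM)) ∂(μ.restrict A) := by
          apply lintegral_mono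
          intro ω
          exact ENNReal.ofReal_le_ofReal (hboundPN TM yM hTMlb hyMub ω).2
        refine ne_of_lt (lt_of_le_of_lt hb ?_)
        rw [lintegral_const]
        exact ENNReal.mul_lt_top ENNReal.ofReal_lt_top (measure_lt_top _ _)
      · calc ∫⁻ ω, ENNReal.ofReal (NM ω) ∂(μ.restrict A)
            = ∫⁻ t, ENNReal.ofReal (κ t) * (μ.restrict A) {ω | yM ω ≤ t ∧ t < TM ω} :=
              hswap yM TM hyMmeas hTMmeas
          _ ≤ ∫⁻ t, ENNReal.ofReal (κ t) * (μ.restrict A) {ω | TM ω ≤ t ∧ t < yM ω} :=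
              lintegral_mono hslice
          _ = ∫⁻ ω, ENNReal.ofReal (PM ω) ∂(μ.restrict A) := (hswap TM yM hTMmeas hyMmeas).symm
    -- combine
    have h1 : ∫ ω, (PM ω - NM ω) ∂(μ.restrict A) ≤ ∫ ω, GM ω ∂(μ.restrict A) :=
      integral_mono_ae (hPMint.sub hNMint) hGMint hptwise
    rw [integral_sub hPMint hNMint] at h1
    have hgoal : ∫ ω in A, GM ω ∂μ = ∫ ω, GM ω ∂(μ.restrict A) := rfl
    show (0:ℝ) ≤ ∫ ω in A, GM ω ∂μ
    rw [hgoal]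
    linarith
  -- pass to the limit M → ∞
  have hGMmeasM : ∀ M : ℕ, AEStronglyMeasurable (fun ω =>
      h (max (min (Y1 ω) (M:ℝ)) (-(M:ℝ)) - Z ω) - h (max (min (T ω) (M:ℝ)) (-(M:ℝ)) - Z ω))
      (μ.restrict A) := by
    intro M
    have hclcont : Continuous (fun x : ℝ => max (min x (M:ℝ)) (-(M:ℝ))) :=
      (continuous_id.min continuous_const).max continuous_const
    exact ((hh_cont.measurable.comp ((hclcont.measurable.comp hY1).sub hZmeas)).sub
      (hh_cont.measurable.comp ((hclcont.measurable.comp hTmeas).sub hZmeas))).aestronglyMeasurable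
  have hlim : Tendsto (fun M : ℕ => ∫ ω in A,
      (h (max (min (Y1 ω) (M:ℝ)) (-(M:ℝ)) - Z ω)
        - h (max (min (T ω) (M:ℝ)) (-(M:ℝ)) - Z ω)) ∂μ) atTop
      (nhds (∫ ω in A, (h (Y1 ω - Z ω) - h (T ω - Z ω)) ∂μ)) := by
    apply tendsto_integral_of_dominated_convergence
      (fun ω => |h (Y1 ω - Z ω) - h (T ω - Z ω)|) hGMmeasM hGfull_int.abs
    · intro M
      refine Eventually.of_forall fun ω => ?_
      rw [Real.norm_eq_abs]
      exact clamp_abs_le (H := fun x => h (x - Z ω))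
        (fun x y hxy => hh_mono (by linarith)) (Nat.cast_nonneg M) (T ω) (Y1 ω)
    · refine Eventually.of_forall fun ω => ?_
      obtain ⟨N, hN⟩ := exists_nat_ge (max |Y1 ω| |T ω|)
      apply Tendsto.congr' _ tendsto_const_nhds
      rw [Filter.EventuallyEq, eventually_atTop]
      refine ⟨N, fun M hM' => ?_⟩
      have hMN : (N:ℝ) ≤ (M:ℝ) := Nat.cast_le.mpr hM'
      have hY1b : |Y1 ω| ≤ (M:ℝ) := le_trans (le_trans (le_max_left _ _) hN) hMN
      have hTb : |T ω| ≤ (M:ℝ) := le_trans (le_trans (le_max_right _ _) hN) hMN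
      rw [abs_le] at hY1b hTb
      rw [min_eq_left hY1b.2, max_eq_left (by linarith [hY1b.1] : -(M:ℝ) ≤ Y1 ω),
        min_eq_left hTb.2, max_eq_left (by linarith [hTb.1] : -(M:ℝ) ≤ T ω)]
  have hGfull0 : (0:ℝ) ≤ ∫ ω in A, (h (Y1 ω - Z ω) - h (T ω - Z ω)) ∂μ :=
    ge_of_tendsto' hlim hM
  rw [integral_sub hHYint hHT] at hGfull0
  have hfinal : ∫ u in Ioo a b, h (q1 (u - a) - q0 u) = ∫ ω in A, h (T ω - Z ω) ∂μ := by
    rw [← hmapA, integral_map hU.aemeasurable hgmeas.aestronglyMeasurable]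
  show ∫ u in Ioo a b, h (q1 (u - a) - q0 u) ≤ ∫ ω in A, h (Y1 ω - q0 (U ω)) ∂μ
  rw [hfinal]
  linarith



end Core

end Lemma1Aux


theorem lemma1_lower_bound
    {Ω : Type*} [MeasurableSpace Ω] (μ : Measure Ω) [IsProbabilityMeasure μ]
    (U Y1 : Ω → ℝ) (F0 F1 Q0 Q1 : ℝ → ℝ)
    (hF0 : IsCDF F0) (hF1 : IsCDF F1)
    (hQ0 : ∀ u, Q0 u = sInf {y : ℝ | u ≤ F0 y})
    (hQ1 : ∀ u, Q1 u = sInf {y : ℝ | u ≤ F1 y})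
    (hU : Measurable U) (hUlaw : μ.map U = volume.restrict (Set.Ioo (0:ℝ) 1))
    (hY1 : Measurable Y1) (hY1law : ∀ y, (μ {ω | Y1 ω ≤ y}).toReal = F1 y)
    (a b : ℝ) (ha : 0 ≤ a) (hab : a < b) (hb : b ≤ 1)
    (f : ℝ → ℝ) (hf_mono : Monotone f) (hf_conv : ConvexOn ℝ Set.univ f)
    (hint : IntegrableOn (fun ω => f (Y1 ω - Q0 (U ω))) {ω | a < U ω ∧ U ω < b} μ)
    (hint' : IntervalIntegrable (fun u => f (Q1 (u - a) - Q0 u)) volume a b) :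
    ∫ u in a..b, f (Q1 (u - a) - Q0 u) ≤
      ∫ ω in {ω | a < U ω ∧ U ω < b}, f (Y1 ω - Q0 (U ω)) ∂μ := by
  open Lemma1Aux in
  have hcdf0 : IsCDF' F0 := ⟨hF0.1, hF0.2.1, hF0.2.2.1, hF0.2.2.2⟩
  have hcdf1 : IsCDF' F1 := ⟨hF1.1, hF1.2.1, hF1.2.2.1, hF1.2.2.2⟩
  have hQ0q : ∀ u, Q0 u = quant F0 u := hQ0
  have hQ1q : ∀ u, Q1 u = quant F1 u := hQ1
  have hAset : {ω | a < U ω ∧ U ω < b} = U ⁻¹' Ioo a b := rfl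
  have hAmeas : MeasurableSet (U ⁻¹' Ioo a b) := hU measurableSet_Ioo
  have hsub01 : Ioo a b ⊆ Ioo (0:ℝ) 1 := Ioo_subset_Ioo ha hb
  have hq0meas : Measurable (quantI F0) := measurable_quantI hcdf0.1 hcdf0.2.2.1 hcdf0.2.2.2
  have hq1meas : Measurable (quantI F1) := measurable_quantI hcdf1.1 hcdf1.2.2.1 hcdf1.2.2.2
  have hY1law' : ∀ y, μ {ω | Y1 ω ≤ y} = ENNReal.ofReal (F1 y) := by
    intro y
    calc μ {ω | Y1 ω ≤ y} = ENNReal.ofReal ((μ {ω | Y1 ω ≤ y}).toReal) :=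
          (ENNReal.ofReal_toReal (measure_ne_top μ _)).symm
      _ = ENNReal.ofReal (F1 y) := by rw [hY1law y]
  -- identification of the integrands on the relevant sets
  have heqω : ∀ ω ∈ U ⁻¹' Ioo a b,
      f (Y1 ω - Q0 (U ω)) = f (Y1 ω - quantI F0 (U ω)) := by
    intro ω hω
    rw [hQ0q, quantI_eq _ (hsub01 hω)]
  have hmemu : ∀ u ∈ Ioo a b, u - a ∈ Ioo (0:ℝ) 1 := by
    intro u hu
    constructor
    · linarith [hu.1]
    · have := hu.2; linarith
  have hequ : ∀ u ∈ Ioo a b,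
      f (Q1 (u - a) - Q0 u) = f (quantI F1 (u - a) - quantI F0 u) := by
    intro u hu
    rw [hQ0q, hQ1q, quantI_eq _ (hsub01 hu), quantI_eq _ (hmemu u hu)]
  -- integrability with the measurable quantile versions
  have hintA : IntegrableOn (fun ω => f (Y1 ω - quantI F0 (U ω))) (U ⁻¹' Ioo a b) μ := by
    rw [hAset] at hint
    apply hint.congr
    filter_upwards [ae_restrict_mem hAmeas] with ω hω
    exact heqω ω hω
  have hintu : IntegrableOn (fun u => f (quantI F1 (u - a) - quantI F0 u)) (Ioo a b) volume := by
    have h1 : IntegrableOn (fun u => f (Q1 (u - a) - Q0 u)) (Ioo a b) volume :=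
      hint'.1.mono_set Ioo_subset_Ioc_self
    apply h1.congr
    filter_upwards [ae_restrict_mem measurableSet_Ioo] with u hu
    exact hequ u hu
  -- dominating functions
  have hD1 : Integrable (fun ω => |f (Y1 ω - quantI F0 (U ω))| + |f 0|)
      (μ.restrict (U ⁻¹' Ioo a b)) := hintA.abs.add (integrable_const _)
  have hD2 : Integrable (fun u => |f (quantI F1 (u - a) - quantI F0 u)| + |f 0|)
      (volume.restrict (Ioo a b)) := hintu.abs.add (integrable_const _)
  have hmeasYn : ∀ n : ℕ, Measurable (fun ω => hN f n (Y1 ω - quantI F0 (U ω))) := by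
    intro n
    exact (hN_cont hf_conv hf_mono n).measurable.comp (hY1.sub (hq0meas.comp hU))
  have hmeasgn : ∀ n : ℕ, Measurable (fun u => hN f n (quantI F1 (u - a) - quantI F0 u)) := by
    intro n
    exact (hN_cont hf_conv hf_mono n).measurable.comp
      ((hq1meas.comp (measurable_id.sub measurable_const)).sub hq0meas)
  have hintAn : ∀ n : ℕ, IntegrableOn (fun ω => hN f n (Y1 ω - quantI F0 (U ω)))
      (U ⁻¹' Ioo a b) μ := by
    intro n
    refine Integrable.mono' hD1 (hmeasYn n).aestronglyMeasurable ?_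
    refine Eventually.of_forall fun ω => ?_
    rw [Real.norm_eq_abs]
    exact hN_abs_le hf_conv hf_mono n _
  have hintun : ∀ n : ℕ, IntegrableOn (fun u => hN f n (quantI F1 (u - a) - quantI F0 u))
      (Ioo a b) volume := by
    intro n
    refine Integrable.mono' hD2 (hmeasgn n).aestronglyMeasurable ?_
    refine Eventually.of_forall fun u => ?_
    rw [Real.norm_eq_abs]
    exact hN_abs_le hf_conv hf_mono n _
  -- apply the core inequality for each truncation level
  have hcoren : ∀ n : ℕ,
      ∫ u in Ioo a b, hN f n (quantI F1 (u - a) - quantI F0 u)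
        ≤ ∫ ω in U ⁻¹' Ioo a b, hN f n (Y1 ω - quantI F0 (U ω)) ∂μ := by
    intro n
    exact core μ U Y1 F0 F1 hcdf0 hcdf1 hU hUlaw hY1 hY1law' a b ha hab hb
      (phiN f n) (hN f n) (phiN_mono hf_conv hf_mono n) (phiN_nonneg hf_conv hf_mono n)
      (rd f (n:ℝ)) (phiN_le_cap hf_conv hf_mono n) (hN_mono hf_conv hf_mono n)
      (hN_cont hf_conv hf_mono n) (hN_diff hf_conv hf_mono n) (hintAn n) (hintun n)
  -- pass to the limit n → ∞
  have hptlim : ∀ x : ℝ, Tendsto (fun n : ℕ => hN f n x) atTop (nhds (f x)) := by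
    intro x
    obtain ⟨N, hN'⟩ := exists_nat_ge x
    apply Tendsto.congr' _ tendsto_const_nhds
    rw [Filter.EventuallyEq, eventually_atTop]
    refine ⟨N, fun n hn => ?_⟩
    exact (hN_eq hf_conv hf_mono n (le_trans hN' (Nat.cast_le.mpr hn))).symm
  have hlimR : Tendsto (fun n : ℕ => ∫ ω in U ⁻¹' Ioo a b, hN f n (Y1 ω - quantI F0 (U ω)) ∂μ)
      atTop (nhds (∫ ω in U ⁻¹' Ioo a b, f (Y1 ω - quantI F0 (U ω)) ∂μ)) := by
    apply tendsto_integral_of_dominated_convergence _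
      (fun n => (hmeasYn n).aestronglyMeasurable) hD1
    · intro n
      refine Eventually.of_forall fun ω => ?_
      rw [Real.norm_eq_abs]
      exact hN_abs_le hf_conv hf_mono n _
    · exact Eventually.of_forall fun ω => hptlim _
  have hlimL : Tendsto (fun n : ℕ => ∫ u in Ioo a b, hN f n (quantI F1 (u - a) - quantI F0 u))
      atTop (nhds (∫ u in Ioo a b, f (quantI F1 (u - a) - quantI F0 u))) := by
    apply tendsto_integral_of_dominated_convergence _
      (fun n => (hmeasgn n).aestronglyMeasurable) hD2
    · intro n
      refine Eventually.of_forall fun u => ?_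
      rw [Real.norm_eq_abs]
      exact hN_abs_le hf_conv hf_mono n _
    · exact Eventually.of_forall fun u => hptlim _
  have hfinal : ∫ u in Ioo a b, f (quantI F1 (u - a) - quantI F0 u)
      ≤ ∫ ω in U ⁻¹' Ioo a b, f (Y1 ω - quantI F0 (U ω)) ∂μ :=
    le_of_tendsto_of_tendsto' hlimL hlimR hcoren
  -- convert back to the original formulation
  have hL : ∫ u in a..b, f (Q1 (u - a) - Q0 u)
      = ∫ u in Ioo a b, f (quantI F1 (u - a) - quantI F0 u) := by
    rw [intervalIntegral.integral_of_le hab.le, MeasureTheory.integral_Ioc_eq_integral_Ioo]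
    apply setIntegral_congr_fun measurableSet_Ioo
    intro u hu
    exact hequ u hu
  have hR : ∫ ω in {ω | a < U ω ∧ U ω < b}, f (Y1 ω - Q0 (U ω)) ∂μ
      = ∫ ω in U ⁻¹' Ioo a b, f (Y1 ω - quantI F0 (U ω)) ∂μ := by
    rw [hAset]
    apply setIntegral_congr_ae hAmeas
    exact Eventually.of_forall fun ω hω => heqω ω hω
  rw [hL, hR]
  exact hfinal
end
end

section
/- Let Q0, Q1 be left-continuous quantile functions of cdfs F0, F1 and 0 ≤ a < b ≤ 1. For Y0 = Q0(U), U ~ Uniform(0,1), and Y1 with cdf F1 under any coupling, ∫_a^b [Q1(u-a) - Q0(u)] du ≤ E[(Y1 - Y0) · 1{a < U < b}] ≤ ∫_a^b [Q1(1 + a - u) - Q0(u)] du. -/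
open MeasureTheory Set Filter Function

noncomputable section

lemma quantile_le_iff {F : ℝ → ℝ} (hF : IsCDF F) {u : ℝ} (hu0 : 0 < u) (hu1 : u < 1)
    (t : ℝ) : sInf {y : ℝ | u ≤ F y} ≤ t ↔ u ≤ F t := by
  obtain ⟨mono, rc, hbot, htop⟩ := hF
  have hne : {y : ℝ | u ≤ F y}.Nonempty := by
    obtain ⟨y, hy⟩ := (htop.eventually (eventually_gt_nhds hu1)).exists
    exact ⟨y, hy.le⟩
  have hbdd : BddBelow {y : ℝ | u ≤ F y} := by
    obtain ⟨y0, hy0⟩ := (eventually_atBot.mp (hbot.eventually (eventually_lt_nhds hu0)))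
    refine ⟨y0, fun y hy => ?_⟩
    by_contra hc
    exact absurd (lt_of_le_of_lt hy (hy0 y (le_of_not_ge hc))) (lt_irrefl u)

  constructor
  · intro h
    have key : ∀ s, t < s → u ≤ F s := by
      intro s hs
      obtain ⟨y, hy, hys⟩ := exists_lt_of_csInf_lt hne (lt_of_le_of_lt h hs)
      exact le_trans hy (mono hys.le)
    have hc : ContinuousWithinAt F (Ioi t) t := (rc t).mono Ioi_subset_Ici_self
    exact ge_of_tendsto hc (eventually_nhdsWithin_of_forall (fun s hs => key s hs))
  · intro h
    exact csInf_le hbdd h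

lemma exists_measurable_quantile {F : ℝ → ℝ} (hF : IsCDF F) :
    ∃ h : ℝ → ℝ, Measurable h ∧ (∀ u, 0 < u → u < 1 → h u = sInf {y : ℝ | u ≤ F y}) ∧
      (∀ u t, 0 < u → u < 1 → (h u ≤ t ↔ u ≤ F t)) := by
  refine ⟨fun u => if 0 < u ∧ u < 1 then sInf {y : ℝ | u ≤ F y} else 0, ?_,
    fun u h1 h2 => by simp [h1, h2], fun u t h1 h2 => by
      simpa [h1, h2] using quantile_le_iff hF h1 h2 t⟩
  apply measurable_of_Iic
  intro t
  have : (fun u => if 0 < u ∧ u < 1 then sInf {y : ℝ | u ≤ F y} else 0) ⁻¹' Iic t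
      = (Ioo 0 1 ∩ Iic (F t)) ∪ (if 0 ≤ t then (Ioo (0:ℝ) 1)ᶜ else ∅) := by
    ext u
    by_cases hu : 0 < u ∧ u < 1
    · have := quantile_le_iff hF hu.1 hu.2 t
      by_cases ht : 0 ≤ t <;>
        simp [hu, this, mem_Ioo, ht, hu.1, hu.2]
    · have hu' : u ∉ Ioo (0:ℝ) 1 := by simpa [mem_Ioo] using hu
      by_cases ht : 0 ≤ t <;> simp [hu, hu', ht]
  rw [this]
  refine (measurableSet_Ioo.inter measurableSet_Iic).union ?_
  by_cases ht : 0 ≤ t <;> simp [ht, measurableSet_Ioo.compl]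

lemma layer_key {Ω : Type*} [MeasurableSpace Ω] (ν : Measure Ω) [IsFiniteMeasure ν]
    {X V : Ω → ℝ} (hX : Measurable X) (hV : Measurable V)
    (hint : Integrable (fun ω => X ω - V ω) ν)
    (hcomp : ∀ t : ℝ, ν {ω | t < V ω} ≤ ν {ω | t < X ω}) :
    0 ≤ ∫ ω, (X ω - V ω) ∂ν := by
  set F : Ω → ℝ → ℝ := fun ω t =>
    (Ico (V ω) (X ω)).indicator 1 t - (Ico (X ω) (V ω)).indicator 1 t with hF
  -- pointwise identity with level-set indicators
  have hpt : ∀ ω t, F ω t =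
      ({ω' | t < X ω'}.indicator 1 ω : ℝ) - {ω' | t < V ω'}.indicator 1 ω := by
    intro ω t
    by_cases h1 : t < X ω <;> by_cases h2 : t < V ω <;>
      simp [hF, indicator, Ico, mem_setOf_eq, h1, h2, le_of_not_gt, not_le.mpr]
  -- slice integrals in t
  have int_slice : ∀ ω, ∫ t, F ω t = X ω - V ω := by
    intro ω
    have i1 : Integrable ((Ico (V ω) (X ω)).indicator (1 : ℝ → ℝ)) volume := by
      rw [integrable_indicator_iff measurableSet_Ico]
      exact integrableOn_const (by simp [Real.volume_Ico, ENNReal.ofReal_lt_top])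
    have i2 : Integrable ((Ico (X ω) (V ω)).indicator (1 : ℝ → ℝ)) volume := by
      rw [integrable_indicator_iff measurableSet_Ico]
      exact integrableOn_const (by simp [Real.volume_Ico, ENNReal.ofReal_lt_top])
    rw [hF]
    rw [integral_sub i1 i2, integral_indicator_one measurableSet_Ico,
      integral_indicator_one measurableSet_Ico, measureReal_def, measureReal_def,
      Real.volume_Ico, Real.volume_Ico,
      ]
    rcases le_total (V ω) (X ω) with h | h
    · rw [ENNReal.toReal_ofReal (by linarith), ENNReal.ofReal_of_nonpos (by linarith)]
      simp
    · rw [ENNReal.ofReal_of_nonpos (by linarith), ENNReal.toReal_ofReal (by linarith)]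
      simp only [ENNReal.toReal_zero]
      ring
  have norm_slice : ∀ ω, ∫ t, ‖F ω t‖ = |X ω - V ω| := by
    intro ω
    rcases le_total (V ω) (X ω) with h | h
    · have he : Ico (X ω) (V ω) = ∅ := Ico_eq_empty (by simpa using h)
      have : ∀ t, ‖F ω t‖ = (Ico (V ω) (X ω)).indicator 1 t := by
        intro t
        simp only [hF, he, indicator_empty, Pi.zero_apply, sub_zero]
        by_cases ht : t ∈ Ico (V ω) (X ω) <;> simp [ht]
      rw [funext this, integral_indicator_one measurableSet_Ico, measureReal_def, Real.volume_Ico,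
        ENNReal.toReal_ofReal (by linarith), abs_of_nonneg (by linarith)]
    · have he : Ico (V ω) (X ω) = ∅ := Ico_eq_empty (by simpa using h)
      have : ∀ t, ‖F ω t‖ = (Ico (X ω) (V ω)).indicator 1 t := by
        intro t
        simp only [hF, he, indicator_empty, Pi.zero_apply, zero_sub, norm_neg]
        by_cases ht : t ∈ Ico (X ω) (V ω) <;> simp [ht]
      rw [funext this, integral_indicator_one measurableSet_Ico, measureReal_def, Real.volume_Ico,
        ENNReal.toReal_ofReal (by linarith), abs_of_nonpos (by linarith)]
      ring
  -- measurability of uncurry F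
  have hS1 : MeasurableSet {p : Ω × ℝ | V p.1 ≤ p.2 ∧ p.2 < X p.1} :=
    (measurableSet_le (hV.comp measurable_fst) measurable_snd).inter
      (measurableSet_lt measurable_snd (hX.comp measurable_fst))
  have hS2 : MeasurableSet {p : Ω × ℝ | X p.1 ≤ p.2 ∧ p.2 < V p.1} :=
    (measurableSet_le (hX.comp measurable_fst) measurable_snd).inter
      (measurableSet_lt measurable_snd (hV.comp measurable_fst))
  have hFm : Measurable (uncurry F) := by
    have : uncurry F = fun p : Ω × ℝ =>
        ({p : Ω × ℝ | V p.1 ≤ p.2 ∧ p.2 < X p.1}.indicator 1 p : ℝ) -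
          {p : Ω × ℝ | X p.1 ≤ p.2 ∧ p.2 < V p.1}.indicator 1 p := by
      funext p
      simp [uncurry, hF, indicator, Ico, mem_setOf_eq]
      congr 1 <;> congr
    rw [this]
    exact ((measurable_const.indicator hS1).sub (measurable_const.indicator hS2))
  have intF : Integrable (uncurry F) (ν.prod volume) := by
    rw [integrable_prod_iff hFm.aestronglyMeasurable]
    constructor
    · refine Filter.Eventually.of_forall (fun ω => ?_)
      have i1 : Integrable ((Ico (V ω) (X ω)).indicator (1 : ℝ → ℝ)) volume := by
        rw [integrable_indicator_iff measurableSet_Ico]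
        exact integrableOn_const (by simp [Real.volume_Ico, ENNReal.ofReal_lt_top])
      have i2 : Integrable ((Ico (X ω) (V ω)).indicator (1 : ℝ → ℝ)) volume := by
        rw [integrable_indicator_iff measurableSet_Ico]
        exact integrableOn_const (by simp [Real.volume_Ico, ENNReal.ofReal_lt_top])
      exact i1.sub i2
    · have : (fun ω => ∫ t, ‖uncurry F (ω, t)‖) = fun ω => |X ω - V ω| := by
        funext ω
        exact norm_slice ω
      rw [this]
      exact hint.abs
  have swap : ∫ ω, ∫ t, F ω t ∂volume ∂ν = ∫ t, ∫ ω, F ω t ∂ν ∂volume :=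
    integral_integral_swap intF
  -- slice in ω
  have slice_omega : ∀ t : ℝ, ∫ ω, F ω t ∂ν =
      (ν {ω | t < X ω}).toReal - (ν {ω | t < V ω}).toReal := by
    intro t
    have hmX : MeasurableSet {ω | t < X ω} := measurableSet_lt measurable_const hX
    have hmV : MeasurableSet {ω | t < V ω} := measurableSet_lt measurable_const hV
    have i1 : Integrable ({ω | t < X ω}.indicator (1 : Ω → ℝ)) ν := by
      rw [integrable_indicator_iff hmX]
      exact integrableOn_const (measure_ne_top ν _)
    have i2 : Integrable ({ω | t < V ω}.indicator (1 : Ω → ℝ)) ν := by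
      rw [integrable_indicator_iff hmV]
      exact integrableOn_const (measure_ne_top ν _)
    calc ∫ ω, F ω t ∂ν
        = ∫ ω, ({ω' | t < X ω'}.indicator 1 ω - {ω' | t < V ω'}.indicator 1 ω : ℝ) ∂ν := by
          exact integral_congr_ae (Filter.Eventually.of_forall (fun ω => hpt ω t))
      _ = (ν {ω | t < X ω}).toReal - (ν {ω | t < V ω}).toReal := by
          rw [integral_sub i1 i2, integral_indicator_one hmX, integral_indicator_one hmV,
              measureReal_def, measureReal_def]
  -- conclude
  have : ∫ ω, (X ω - V ω) ∂ν = ∫ t, ∫ ω, F ω t ∂ν ∂volume := by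
    rw [← swap]
    exact integral_congr_ae (Filter.Eventually.of_forall (fun ω => (int_slice ω).symm))
  rw [this]
  refine integral_nonneg (fun t => ?_)
  show (0:ℝ) ≤ ∫ ω, F ω t ∂ν
  rw [slice_omega t]
  have h1 := hcomp t
  have h2 : ν {ω | t < V ω} ≠ ⊤ := measure_ne_top ν _
  have h3 : ν {ω | t < X ω} ≠ ⊤ := measure_ne_top ν _
  linarith [(ENNReal.toReal_le_toReal h2 h3).mpr h1]

theorem subgroup_treatment_effect_bounds
    {Ω : Type*} [MeasurableSpace Ω] (μ : Measure Ω) [IsProbabilityMeasure μ]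
    (U Y1 : Ω → ℝ) (F0 F1 Q0 Q1 : ℝ → ℝ)
    (hF0 : IsCDF F0) (hF1 : IsCDF F1)
    (hQ0 : ∀ u, Q0 u = sInf {y : ℝ | u ≤ F0 y})
    (hQ1 : ∀ u, Q1 u = sInf {y : ℝ | u ≤ F1 y})
    (hU : Measurable U) (hUlaw : μ.map U = volume.restrict (Set.Ioo (0:ℝ) 1))
    (hY1 : Measurable Y1) (hY1law : ∀ y, (μ {ω | Y1 ω ≤ y}).toReal = F1 y)
    (a b : ℝ) (ha : 0 ≤ a) (hab : a < b) (hb : b ≤ 1)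
    (hint : IntegrableOn (fun ω => Y1 ω - Q0 (U ω)) {ω | a < U ω ∧ U ω < b} μ)
    (hintL : IntervalIntegrable (fun u => Q1 (u - a) - Q0 u) volume a b)
    (hintU : IntervalIntegrable (fun u => Q1 (1 + a - u) - Q0 u) volume a b) :
    (∫ u in a..b, (Q1 (u - a) - Q0 u)) ≤
        (∫ ω in {ω | a < U ω ∧ U ω < b}, (Y1 ω - Q0 (U ω)) ∂μ) ∧
      (∫ ω in {ω | a < U ω ∧ U ω < b}, (Y1 ω - Q0 (U ω)) ∂μ) ≤
        ∫ u in a..b, (Q1 (1 + a - u) - Q0 u) := by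
  obtain ⟨h0, h0meas, h0spec, h0iff⟩ := exists_measurable_quantile hF0
  obtain ⟨h1, h1meas, h1spec, h1iff⟩ := exists_measurable_quantile hF1
  set A : Set Ω := {ω | a < U ω ∧ U ω < b} with hAdef
  have hApre : A = U ⁻¹' Ioo a b := rfl
  have hA : MeasurableSet A := hU measurableSet_Ioo
  have hsub : Ioo a b ⊆ Ioo 0 1 := Ioo_subset_Ioo ha hb
  have hmap : (μ.restrict A).map U = volume.restrict (Ioo a b) := by
    rw [hApre, ← Measure.restrict_map hU measurableSet_Ioo, hUlaw,
      Measure.restrict_restrict measurableSet_Ioo, inter_eq_left.mpr hsub]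
  -- bounds on F1
  have hF1nonneg : ∀ t, 0 ≤ F1 t := fun t => (hY1law t) ▸ ENNReal.toReal_nonneg
  have hF1le1 : ∀ t, F1 t ≤ 1 := by
    intro t
    rw [← hY1law t]
    have := prob_le_one (μ := μ) (s := {ω | Y1 ω ≤ t})
    calc (μ {ω | Y1 ω ≤ t}).toReal ≤ (1 : ENNReal).toReal :=
          ENNReal.toReal_mono ENNReal.one_ne_top this
      _ = 1 := by simp
  have hY1m : ∀ t, μ {ω | Y1 ω ≤ t} = ENNReal.ofReal (F1 t) := fun t => by
    rw [← hY1law t, ENNReal.ofReal_toReal (measure_ne_top μ _)]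
  have hmeasIoo : ∀ c d : ℝ, 0 ≤ c → d ≤ 1 → μ (U ⁻¹' Ioo c d) = ENNReal.ofReal (d - c) := by
    intro c d hc hd
    rw [← Measure.map_apply hU measurableSet_Ioo, hUlaw,
      Measure.restrict_apply measurableSet_Ioo, inter_eq_left.mpr (Ioo_subset_Ioo hc hd),
      Real.volume_Ioo]
  -- change of variables machinery
  have cov_int : ∀ f' : ℝ → ℝ, Measurable f' → ∫ ω in A, f' (U ω) ∂μ = ∫ u in Ioo a b, f' u := by
    intro f' hf'
    rw [show (∫ u in Ioo a b, f' u) = ∫ u, f' u ∂((μ.restrict A).map U) from by rw [hmap],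
      integral_map hU.aemeasurable hf'.aestronglyMeasurable]
  have cov_integrable : ∀ f' : ℝ → ℝ, Measurable f' → IntegrableOn f' (Ioo a b) volume →
      IntegrableOn (fun ω => f' (U ω)) A μ := by
    intro f' hf' hi
    have : Integrable f' ((μ.restrict A).map U) := by rw [hmap]; exact hi
    exact (integrable_map_measure hf'.aestronglyMeasurable hU.aemeasurable).mp this
  -- facts about membership
  have hmem : ∀ ω, ω ∈ A → (0 < U ω ∧ U ω < 1) ∧ (0 < U ω - a ∧ U ω - a < 1) ∧
      (0 < 1 + a - U ω ∧ 1 + a - U ω < 1) := by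
    intro ω hω
    obtain ⟨hω1, hω2⟩ := hω
    refine ⟨⟨by linarith, by linarith⟩, ⟨by linarith, by linarith⟩, ⟨by linarith, by linarith⟩⟩
  -- the measurable integrands
  set fL : ℝ → ℝ := fun u => h1 (u - a) - h0 u with hfL
  set fU : ℝ → ℝ := fun u => h1 (1 + a - u) - h0 u with hfU
  have hfLm : Measurable fL := (h1meas.comp (measurable_id.sub_const a)).sub h0meas
  have hfUm : Measurable fU := (h1meas.comp (measurable_const.sub measurable_id)).sub h0meas
  have hmemIoo : ∀ u ∈ Ioo a b, (0 < u ∧ u < 1) ∧ (0 < u - a ∧ u - a < 1) ∧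
      (0 < 1 + a - u ∧ 1 + a - u < 1) := by
    intro u hu
    obtain ⟨h1', h2'⟩ := hu
    refine ⟨⟨by linarith, by linarith⟩, ⟨by linarith, by linarith⟩, ⟨by linarith, by linarith⟩⟩
  have eqL : EqOn (fun u => Q1 (u - a) - Q0 u) fL (Ioo a b) := by
    intro u hu
    obtain ⟨hu0, hua, _⟩ := hmemIoo u hu
    simp only [hfL]
    rw [hQ1, hQ0, h1spec _ hua.1 hua.2, h0spec _ hu0.1 hu0.2]
  have eqU : EqOn (fun u => Q1 (1 + a - u) - Q0 u) fU (Ioo a b) := by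
    intro u hu
    obtain ⟨hu0, _, hub⟩ := hmemIoo u hu
    simp only [hfU]
    rw [hQ1, hQ0, h1spec _ hub.1 hub.2, h0spec _ hu0.1 hu0.2]
  -- interval integrals to Ω integrals
  have ivalL : (∫ u in a..b, (Q1 (u - a) - Q0 u)) = ∫ ω in A, fL (U ω) ∂μ := by
    rw [intervalIntegral.integral_of_le hab.le, MeasureTheory.integral_Ioc_eq_integral_Ioo,
      setIntegral_congr_fun measurableSet_Ioo eqL, cov_int fL hfLm]
  have ivalU : (∫ u in a..b, (Q1 (1 + a - u) - Q0 u)) = ∫ ω in A, fU (U ω) ∂μ := by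
    rw [intervalIntegral.integral_of_le hab.le, MeasureTheory.integral_Ioc_eq_integral_Ioo,
      setIntegral_congr_fun measurableSet_Ioo eqU, cov_int fU hfUm]
  have iintL : IntegrableOn (fun ω => fL (U ω)) A μ :=
    cov_integrable fL hfLm (((hintL.1).mono_set Ioo_subset_Ioc_self).congr_fun eqL measurableSet_Ioo)
  have iintU : IntegrableOn (fun ω => fU (U ω)) A μ :=
    cov_integrable fU hfUm (((hintU.1).mono_set Ioo_subset_Ioc_self).congr_fun eqU measurableSet_Ioo)
  -- replace Q0 by h0 in the Ω integral
  have eqg0 : EqOn (fun ω => Y1 ω - Q0 (U ω)) (fun ω => Y1 ω - h0 (U ω)) A := by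
    intro ω hω
    obtain ⟨hu0, _, _⟩ := hmem ω hω
    simp only
    rw [hQ0, h0spec _ hu0.1 hu0.2]
  have ig0 : IntegrableOn (fun ω => Y1 ω - h0 (U ω)) A μ := hint.congr_fun eqg0 hA
  have ival0 : (∫ ω in A, (Y1 ω - Q0 (U ω)) ∂μ) = ∫ ω in A, (Y1 ω - h0 (U ω)) ∂μ :=
    setIntegral_congr_fun hA eqg0
  -- lower bound
  have lower : (∫ u in a..b, (Q1 (u - a) - Q0 u)) ≤ ∫ ω in A, (Y1 ω - Q0 (U ω)) ∂μ := by
    rw [ivalL, ival0]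
    have key : 0 ≤ ∫ ω in A, (Y1 ω - h1 (U ω - a)) ∂μ := by
      refine layer_key (μ.restrict A) hY1 (h1meas.comp (hU.sub_const a)) ?_ ?_
      · have heq : (fun ω => Y1 ω - h1 (U ω - a)) =
            fun ω => (Y1 ω - h0 (U ω)) - fL (U ω) := by
          funext ω; simp only [hfL]; ring
        rw [heq]
        exact ig0.sub iintL
      · intro t
        have hVm : MeasurableSet {ω | t < h1 (U ω - a)} :=
          measurableSet_lt measurable_const (h1meas.comp (hU.sub_const a))
        have hXm : MeasurableSet {ω | t < Y1 ω} := measurableSet_lt measurable_const hY1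
        rw [Measure.restrict_apply hVm, Measure.restrict_apply hXm]
        have hset : {ω | t < h1 (U ω - a)} ∩ A = U ⁻¹' Ioo (a + F1 t) b := by
          ext ω
          simp only [mem_inter_iff, mem_setOf_eq, mem_preimage, mem_Ioo, hAdef]
          constructor
          · rintro ⟨h1t, hω1, hω2⟩
            have hu : 0 < U ω - a ∧ U ω - a < 1 := ⟨by linarith, by linarith⟩
            have hgt : F1 t < U ω - a := by
              by_contra hc
              exact absurd ((h1iff _ t hu.1 hu.2).mpr (le_of_not_gt hc)) (not_le.mpr h1t)
            exact ⟨by linarith, hω2⟩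
          · rintro ⟨hω1, hω2⟩
            have ha1 : a < U ω := by have := hF1nonneg t; linarith
            have hu : 0 < U ω - a ∧ U ω - a < 1 := ⟨by linarith, by linarith⟩
            refine ⟨?_, ha1, hω2⟩
            by_contra hc
            have := (h1iff _ t hu.1 hu.2).mp (le_of_not_gt hc)
            linarith
        rw [hset, hmeasIoo _ _ (by linarith [hF1nonneg t]) hb]
        have hsubA : A ⊆ ({ω | t < Y1 ω} ∩ A) ∪ {ω | Y1 ω ≤ t} := by
          intro ω hω
          rcases lt_or_ge t (Y1 ω) with h | h
          · exact Or.inl ⟨h, hω⟩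
          · exact Or.inr h
        have hle : μ A ≤ μ ({ω | t < Y1 ω} ∩ A) + μ {ω | Y1 ω ≤ t} :=
          le_trans (measure_mono hsubA) (measure_union_le _ _)
        have hAval : μ A = ENNReal.ofReal (b - a) := by rw [hApre]; exact hmeasIoo a b ha hb
        rw [hAval, hY1m t] at hle
        have hofr : ENNReal.ofReal (b - (a + F1 t)) =
            ENNReal.ofReal (b - a) - ENNReal.ofReal (F1 t) := by
          rw [← ENNReal.ofReal_sub _ (hF1nonneg t)]
          congr 1; ring
        rw [hofr]
        exact tsub_le_iff_right.mpr hle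
    have hsub' : ∫ ω in A, (Y1 ω - h1 (U ω - a)) ∂μ =
        (∫ ω in A, (Y1 ω - h0 (U ω)) ∂μ) - ∫ ω in A, fL (U ω) ∂μ := by
      rw [← integral_sub ig0 iintL]
      apply integral_congr_ae (Filter.Eventually.of_forall _)
      intro ω; simp only [hfL]; ring
    rw [hsub'] at key
    linarith
  -- upper bound
  have upper : (∫ ω in A, (Y1 ω - Q0 (U ω)) ∂μ) ≤ ∫ u in a..b, (Q1 (1 + a - u) - Q0 u) := by
    rw [ivalU, ival0]
    have key : 0 ≤ ∫ ω in A, (h1 (1 + a - U ω) - Y1 ω) ∂μ := by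
      refine layer_key (μ.restrict A) (h1meas.comp (measurable_const.sub hU)) hY1 ?_ ?_
      · have heq : (fun ω => h1 (1 + a - U ω) - Y1 ω) =
            fun ω => fU (U ω) - (Y1 ω - h0 (U ω)) := by
          funext ω; simp only [hfU]; ring
        rw [heq]
        exact iintU.sub ig0
      · intro t
        have hXm : MeasurableSet {ω | t < h1 (1 + a - U ω)} :=
          measurableSet_lt measurable_const (h1meas.comp (measurable_const.sub hU))
        have hVm : MeasurableSet {ω | t < Y1 ω} := measurableSet_lt measurable_const hY1
        rw [Measure.restrict_apply hVm, Measure.restrict_apply hXm]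
        have hset : {ω | t < h1 (1 + a - U ω)} ∩ A = U ⁻¹' Ioo a (min b (1 + a - F1 t)) := by
          ext ω
          simp only [mem_inter_iff, mem_setOf_eq, mem_preimage, mem_Ioo, hAdef, lt_min_iff]
          constructor
          · rintro ⟨h1t, hω1, hω2⟩
            have hu : 0 < 1 + a - U ω ∧ 1 + a - U ω < 1 := ⟨by linarith, by linarith⟩
            have hgt : F1 t < 1 + a - U ω := by
              by_contra hc
              exact absurd ((h1iff _ t hu.1 hu.2).mpr (le_of_not_gt hc)) (not_le.mpr h1t)
            exact ⟨hω1, hω2, by linarith⟩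
          · rintro ⟨hω1, hω2, hω3⟩
            have hu : 0 < 1 + a - U ω ∧ 1 + a - U ω < 1 := ⟨by linarith, by linarith⟩
            refine ⟨?_, hω1, hω2⟩
            by_contra hc
            have := (h1iff _ t hu.1 hu.2).mp (le_of_not_gt hc)
            linarith
        rw [hset, hmeasIoo a (min b (1 + a - F1 t)) ha (le_trans (min_le_left _ _) hb)]
        rcases le_total b (1 + a - F1 t) with hmin | hmin
        · rw [min_eq_left hmin]
          calc μ ({ω | t < Y1 ω} ∩ A) ≤ μ A := measure_mono inter_subset_right
            _ = ENNReal.ofReal (b - a) := by rw [hApre]; exact hmeasIoo a b ha hb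
        · rw [min_eq_right hmin]
          have hcmpl : {ω | t < Y1 ω} = {ω | Y1 ω ≤ t}ᶜ := by
            ext ω; simp [not_le]
          calc μ ({ω | t < Y1 ω} ∩ A) ≤ μ {ω | t < Y1 ω} := measure_mono inter_subset_left
            _ = ENNReal.ofReal (1 + a - F1 t - a) := by
              rw [hcmpl, measure_compl (measurableSet_le hY1 measurable_const)
                (measure_ne_top μ _), hY1m t, measure_univ,
                show (1:ENNReal) = ENNReal.ofReal 1 from (ENNReal.ofReal_one).symm,
                ← ENNReal.ofReal_sub _ (hF1nonneg t)]
              congr 1; ring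
    have hsub' : ∫ ω in A, (h1 (1 + a - U ω) - Y1 ω) ∂μ =
        (∫ ω in A, fU (U ω) ∂μ) - ∫ ω in A, (Y1 ω - h0 (U ω)) ∂μ := by
      rw [← integral_sub iintU ig0]
      apply integral_congr_ae (Filter.Eventually.of_forall _)
      intro ω; simp only [hfU]; ring
    rw [hsub'] at key
    linarith
  exact ⟨lower, upper⟩
end
end

section
/- Let Q0, Q1 be left-continuous quantile functions of cdfs F0, F1 and 0 ≤ a < b ≤ 1. For Y0 = Q0(U), U ~ Uniform(0,1), and Y1 with cdf F1 under any coupling, ∫_a^b max(Q1(u-a) - Q0(u), 0) du ≤ E[max(Y1 - Y0, 0) · 1{a < U < b}] ≤ ∫_a^b max(Q1(1 + a - u) - Q0(u), 0) du. -/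
open MeasureTheory Set Filter Function
open scoped ENNReal

noncomputable section

lemma cdf_level_set_eq_Ici (F : ℝ → ℝ) (hF : IsCDF F) {u : ℝ} (h0 : 0 < u) (h1 : u < 1) :
    {y : ℝ | u ≤ F y} = Ici (sInf {y : ℝ | u ≤ F y}) := by
  obtain ⟨hmono, hrc, hbot, htop⟩ := hF
  set S := {y : ℝ | u ≤ F y} with hS
  have hne : S.Nonempty := by
    obtain ⟨y, hy⟩ := (htop.eventually (eventually_gt_nhds h1)).exists
    exact ⟨y, hy.le⟩
  have hbdd : BddBelow S := by
    obtain ⟨y₀, hy₀⟩ := eventually_atBot.mp (hbot.eventually (eventually_lt_nhds h0))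
    refine ⟨y₀, fun y hy => ?_⟩
    by_contra hlt
    exact absurd hy (not_le.mpr (hy₀ y (le_of_not_ge hlt)))
  set q := sInf S with hq
  have hglb : IsGLB S q := isGLB_csInf hne hbdd
  have hSIci : S ⊆ Ici q := fun y hy => hglb.1 hy
  have hqS : q ∈ S := by
    have hcl : q ∈ closure S := hglb.mem_closure hne
    haveI : (nhdsWithin q S).NeBot := mem_closure_iff_nhdsWithin_neBot.mp hcl
    have htd : Tendsto F (nhdsWithin q S) (nhds (F q)) :=
      (hrc q).mono_left (nhdsWithin_mono q hSIci)
    have hev : ∀ᶠ y in nhdsWithin q S, u ≤ F y :=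
      eventually_mem_nhdsWithin.mono fun y hy => hy
    exact ge_of_tendsto htd hev
  ext y
  exact ⟨fun hy => hSIci hy, fun hy => le_trans hqS (hmono hy)⟩

lemma vol_between {c d : ℝ} {S : Set ℝ} (h1 : Ioo c d ⊆ S) (h2 : S ⊆ Ioc c d) :
    volume S = ENNReal.ofReal (d - c) :=
  le_antisymm ((measure_mono h2).trans_eq Real.volume_Ioc)
    (Real.volume_Ioo (a := c) (b := d) ▸ measure_mono h1)

lemma ofReal_max0 (x : ℝ) : ENNReal.ofReal (max x 0) = ENNReal.ofReal x := by
  rcases le_total x 0 with h | h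
  · rw [max_eq_right h, ENNReal.ofReal_zero, ENNReal.ofReal_of_nonpos h]
  · rw [max_eq_left h]

theorem subgroup_positive_part_bounds
    {Ω : Type*} [MeasurableSpace Ω] (μ : Measure Ω) [IsProbabilityMeasure μ]
    (U Y1 : Ω → ℝ) (F0 F1 Q0 Q1 : ℝ → ℝ)
    (hF0 : IsCDF F0) (hF1 : IsCDF F1)
    (hQ0 : ∀ u, Q0 u = sInf {y : ℝ | u ≤ F0 y})
    (hQ1 : ∀ u, Q1 u = sInf {y : ℝ | u ≤ F1 y})
    (hU : Measurable U) (hUlaw : μ.map U = volume.restrict (Set.Ioo (0:ℝ) 1))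
    (hY1 : Measurable Y1) (hY1law : ∀ y, (μ {ω | Y1 ω ≤ y}).toReal = F1 y)
    (a b : ℝ) (ha : 0 ≤ a) (hab : a < b) (hb : b ≤ 1)
    (hint : IntegrableOn (fun ω => max (Y1 ω - Q0 (U ω)) 0) {ω | a < U ω ∧ U ω < b} μ)
    (hintL : IntervalIntegrable (fun u => max (Q1 (u - a) - Q0 u) 0) volume a b)
    (hintU : IntervalIntegrable (fun u => max (Q1 (1 + a - u) - Q0 u) 0) volume a b) :
    (∫ u in a..b, max (Q1 (u - a) - Q0 u) 0) ≤
        (∫ ω in {ω | a < U ω ∧ U ω < b}, max (Y1 ω - Q0 (U ω)) 0 ∂μ) ∧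
      (∫ ω in {ω | a < U ω ∧ U ω < b}, max (Y1 ω - Q0 (U ω)) 0 ∂μ) ≤
        ∫ u in a..b, max (Q1 (1 + a - u) - Q0 u) 0 := by
  set A : Set Ω := {ω | a < U ω ∧ U ω < b} with hAdef
  have hApre : A = U ⁻¹' Ioo a b := rfl
  have hA : MeasurableSet A := hApre ▸ hU measurableSet_Ioo
  have hmF0 : Measurable F0 := hF0.1.measurable
  have hmF1 : Measurable F1 := hF1.1.measurable
  have hr0 : ∀ t, 0 ≤ F1 t := fun t => (hY1law t) ▸ ENNReal.toReal_nonneg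
  have hr1law : ∀ t, μ {ω | Y1 ω ≤ t} = ENNReal.ofReal (F1 t) := fun t => by
    rw [← hY1law t, ENNReal.ofReal_toReal (measure_ne_top μ _)]
  have hmle : ∀ t, MeasurableSet {ω | Y1 ω ≤ t} := fun t => hY1 measurableSet_Iic
  have hsub : Ioo a b ⊆ Ioo (0:ℝ) 1 := Ioo_subset_Ioo ha hb
  -- Galois connections
  have hG0 : ∀ u : ℝ, u ∈ Ioo (0:ℝ) 1 → ∀ t, (u ≤ F0 t ↔ Q0 u ≤ t) := by
    intro u hu t
    have h := cdf_level_set_eq_Ici F0 hF0 hu.1 hu.2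
    rw [← hQ0 u] at h
    exact (Set.ext_iff.mp h t)
  have hG1 : ∀ u : ℝ, u ∈ Ioo (0:ℝ) 1 → ∀ t, (u ≤ F1 t ↔ Q1 u ≤ t) := by
    intro u hu t
    have h := cdf_level_set_eq_Ici F1 hF1 hu.1 hu.2
    rw [← hQ1 u] at h
    exact (Set.ext_iff.mp h t)
  have hG1' : ∀ u : ℝ, u ∈ Ioo (0:ℝ) 1 → ∀ t, (F1 t < u ↔ t < Q1 u) := by
    intro u hu t
    rw [← not_le, ← not_le, not_iff_not]
    exact hG1 u hu t
  -- the E side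
  set SE : Set (Ω × ℝ) := {p | U p.1 ≤ F0 p.2 ∧ p.2 < Y1 p.1} with hSEdef
  have hSE : MeasurableSet SE := by
    rw [hSEdef, Set.setOf_and]
    exact (measurableSet_le (hU.comp measurable_fst) (hmF0.comp measurable_snd)).inter
      (measurableSet_lt measurable_snd (hY1.comp measurable_fst))
  set fE : Ω → ℝ → ℝ≥0∞ := fun ω t => SE.indicator (1 : Ω × ℝ → ℝ≥0∞) (ω, t) with hfEdef
  have hmE : Measurable (uncurry fE) := by
    have : uncurry fE = SE.indicator 1 := rfl
    rw [this]
    exact measurable_const.indicator hSE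
  have hptE : ∀ ω ∈ A, (∫⁻ t, fE ω t) = ENNReal.ofReal (max (Y1 ω - Q0 (U ω)) 0) := by
    intro ω hω
    have hu : U ω ∈ Ioo (0:ℝ) 1 := hsub ⟨hω.1, hω.2⟩
    have hset : ∀ t, fE ω t = (Ico (Q0 (U ω)) (Y1 ω)).indicator 1 t := by
      intro t
      simp only [hfEdef, Set.indicator_apply, hSEdef, mem_setOf_eq, mem_Ico, hG0 (U ω) hu t, Pi.one_apply]
    rw [lintegral_congr hset, lintegral_indicator_one measurableSet_Ico, Real.volume_Ico,
      ofReal_max0]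
  have hswapE : (∫⁻ ω in A, ENNReal.ofReal (max (Y1 ω - Q0 (U ω)) 0) ∂μ)
      = ∫⁻ t, μ (A ∩ {ω | U ω ≤ F0 t ∧ t < Y1 ω}) := by
    have h1 : (∫⁻ ω in A, ENNReal.ofReal (max (Y1 ω - Q0 (U ω)) 0) ∂μ)
        = ∫⁻ ω in A, ∫⁻ t, fE ω t ∂volume ∂μ :=
      (setLIntegral_congr_fun hA (fun ω hω => (hptE ω hω).symm))
    rw [h1, lintegral_lintegral_swap hmE.aemeasurable]
    refine lintegral_congr fun t => ?_
    have hS : MeasurableSet {ω | U ω ≤ F0 t ∧ t < Y1 ω} := by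
      rw [Set.setOf_and]
      exact (measurableSet_le hU measurable_const).inter (measurableSet_lt measurable_const hY1)
    have hfe : ∀ ω, fE ω t = ({ω | U ω ≤ F0 t ∧ t < Y1 ω}).indicator 1 ω := by
      intro ω
      simp only [hfEdef, Set.indicator_apply, hSEdef, mem_setOf_eq, Pi.one_apply]
    rw [lintegral_congr hfe, lintegral_indicator_one hS, Measure.restrict_apply hS,
      Set.inter_comm]
  -- the L side
  set SL : Set (ℝ × ℝ) := {p | p.1 ≤ F0 p.2 ∧ F1 p.2 < p.1 - a} with hSLdef
  have hSL : MeasurableSet SL := by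
    rw [hSLdef, Set.setOf_and]
    exact (measurableSet_le measurable_fst (hmF0.comp measurable_snd)).inter
      (measurableSet_lt (hmF1.comp measurable_snd) (measurable_fst.sub measurable_const))
  set fL : ℝ → ℝ → ℝ≥0∞ := fun u t => SL.indicator (1 : ℝ × ℝ → ℝ≥0∞) (u, t) with hfLdef
  have hmL : Measurable (uncurry fL) := by
    have : uncurry fL = SL.indicator 1 := rfl
    rw [this]; exact measurable_const.indicator hSL
  have hptL : ∀ u ∈ Ioo a b, (∫⁻ t, fL u t) = ENNReal.ofReal (max (Q1 (u - a) - Q0 u) 0) := by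
    intro u hu'
    have hu : u ∈ Ioo (0:ℝ) 1 := hsub hu'
    have hua : u - a ∈ Ioo (0:ℝ) 1 := ⟨sub_pos.mpr hu'.1, by
      have := hu'.2; simp only [mem_Ioo] at *; linarith⟩
    have hset : ∀ t, fL u t = (Ico (Q0 u) (Q1 (u - a))).indicator 1 t := by
      intro t
      simp only [hfLdef, Set.indicator_apply, hSLdef, mem_setOf_eq, mem_Ico,
        hG0 u hu t, hG1' (u - a) hua t, Pi.one_apply]
    rw [lintegral_congr hset, lintegral_indicator_one measurableSet_Ico, Real.volume_Ico,
      ofReal_max0]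
  have hswapL : (∫⁻ u in Ioo a b, ENNReal.ofReal (max (Q1 (u - a) - Q0 u) 0))
      = ∫⁻ t, ENNReal.ofReal (min b (F0 t) - (a + F1 t)) := by
    have h1 : (∫⁻ u in Ioo a b, ENNReal.ofReal (max (Q1 (u - a) - Q0 u) 0))
        = ∫⁻ u in Ioo a b, ∫⁻ t, fL u t ∂volume :=
      (setLIntegral_congr_fun measurableSet_Ioo (fun u hu => (hptL u hu).symm))
    rw [h1, lintegral_lintegral_swap hmL.aemeasurable]
    refine lintegral_congr fun t => ?_
    have hS : MeasurableSet {u : ℝ | u ≤ F0 t ∧ F1 t < u - a} := by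
      rw [Set.setOf_and]
      exact (measurableSet_le measurable_id measurable_const).inter
        (measurableSet_lt measurable_const (measurable_id.sub measurable_const))
    have hfe : ∀ u, fL u t = ({u : ℝ | u ≤ F0 t ∧ F1 t < u - a}).indicator 1 u := by
      intro u
      simp only [hfLdef, Set.indicator_apply, hSLdef, mem_setOf_eq, Pi.one_apply]
    rw [lintegral_congr hfe, lintegral_indicator_one hS, Measure.restrict_apply hS]
    refine vol_between ?_ ?_
    · rintro u ⟨h1, h2⟩
      have h3 := lt_min_iff.mp h2
      have hF1t := hr0 t
      exact ⟨⟨h3.2.le, by linarith⟩, by constructor <;> [linarith; exact h3.1]⟩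
    · rintro u ⟨⟨h1, h2⟩, h3, h4⟩
      exact ⟨by linarith, le_min h4.le h1⟩
  -- the U side
  set SU : Set (ℝ × ℝ) := {p | p.1 ≤ F0 p.2 ∧ F1 p.2 < 1 + a - p.1} with hSUdef
  have hSU : MeasurableSet SU := by
    rw [hSUdef, Set.setOf_and]
    exact (measurableSet_le measurable_fst (hmF0.comp measurable_snd)).inter
      (measurableSet_lt (hmF1.comp measurable_snd) (measurable_const.sub measurable_fst))
  set fU : ℝ → ℝ → ℝ≥0∞ := fun u t => SU.indicator (1 : ℝ × ℝ → ℝ≥0∞) (u, t) with hfUdef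
  have hmU : Measurable (uncurry fU) := by
    have : uncurry fU = SU.indicator 1 := rfl
    rw [this]; exact measurable_const.indicator hSU
  have hptU : ∀ u ∈ Ioo a b, (∫⁻ t, fU u t) = ENNReal.ofReal (max (Q1 (1 + a - u) - Q0 u) 0) := by
    intro u hu'
    have hu : u ∈ Ioo (0:ℝ) 1 := hsub hu'
    have hua : 1 + a - u ∈ Ioo (0:ℝ) 1 := by
      simp only [mem_Ioo] at hu' ⊢
      constructor <;> [linarith; linarith [hu'.1]]
    have hset : ∀ t, fU u t = (Ico (Q0 u) (Q1 (1 + a - u))).indicator 1 t := by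
      intro t
      simp only [hfUdef, Set.indicator_apply, hSUdef, mem_setOf_eq, mem_Ico,
        hG0 u hu t, hG1' (1 + a - u) hua t, Pi.one_apply]
    rw [lintegral_congr hset, lintegral_indicator_one measurableSet_Ico, Real.volume_Ico,
      ofReal_max0]
  have hswapU : (∫⁻ u in Ioo a b, ENNReal.ofReal (max (Q1 (1 + a - u) - Q0 u) 0))
      = ∫⁻ t, ENNReal.ofReal (min (min b (F0 t)) (1 + a - F1 t) - a) := by
    have h1 : (∫⁻ u in Ioo a b, ENNReal.ofReal (max (Q1 (1 + a - u) - Q0 u) 0))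
        = ∫⁻ u in Ioo a b, ∫⁻ t, fU u t ∂volume :=
      (setLIntegral_congr_fun measurableSet_Ioo (fun u hu => (hptU u hu).symm))
    rw [h1, lintegral_lintegral_swap hmU.aemeasurable]
    refine lintegral_congr fun t => ?_
    have hS : MeasurableSet {u : ℝ | u ≤ F0 t ∧ F1 t < 1 + a - u} := by
      rw [Set.setOf_and]
      exact (measurableSet_le measurable_id measurable_const).inter
        (measurableSet_lt measurable_const (measurable_const.sub measurable_id))
    have hfe : ∀ u, fU u t = ({u : ℝ | u ≤ F0 t ∧ F1 t < 1 + a - u}).indicator 1 u := by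
      intro u
      simp only [hfUdef, Set.indicator_apply, hSUdef, mem_setOf_eq, Pi.one_apply]
    rw [lintegral_congr hfe, lintegral_indicator_one hS, Measure.restrict_apply hS]
    refine vol_between ?_ ?_
    · rintro u ⟨h1, h2⟩
      have h3 := lt_min_iff.mp h2
      have h4 := lt_min_iff.mp h3.1
      exact ⟨⟨h4.2.le, by linarith [h3.2]⟩, h1, h4.1⟩
    · rintro u ⟨⟨h1, h2⟩, h3, h4⟩
      exact ⟨h3, le_min (le_min h4.le h1) (by linarith)⟩
  -- measure of subgroup ∩ quantile event
  have hμAF0 : ∀ t, μ (A ∩ {ω | U ω ≤ F0 t}) = ENNReal.ofReal (min b (F0 t) - a) := by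
    intro t
    have hpre : A ∩ {ω | U ω ≤ F0 t} = U ⁻¹' (Ioo a b ∩ Iic (F0 t)) := rfl
    have hs : MeasurableSet (Ioo a b ∩ Iic (F0 t)) := measurableSet_Ioo.inter measurableSet_Iic
    rw [hpre, ← Measure.map_apply hU hs, hUlaw, Measure.restrict_apply hs,
      inter_eq_self_of_subset_left (inter_subset_left.trans hsub)]
    refine vol_between ?_ ?_
    · rintro u ⟨h1, h2⟩
      have h3 := lt_min_iff.mp h2
      exact ⟨⟨h1, h3.1⟩, h3.2.le⟩
    · rintro u ⟨⟨h1, h2⟩, h3⟩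
      exact ⟨h1, le_min h2.le h3⟩
  have hY1gt : ∀ t, μ {ω | t < Y1 ω} = ENNReal.ofReal (1 - F1 t) := by
    intro t
    have hc : {ω | t < Y1 ω} = {ω | Y1 ω ≤ t}ᶜ := by ext ω; simp [not_le]
    rw [hc, measure_compl (hmle t) (measure_ne_top μ _), measure_univ, hr1law t,
      ENNReal.ofReal_sub _ (hr0 t), ENNReal.ofReal_one]
  -- pointwise comparisons in t
  have hlow : ∀ t, ENNReal.ofReal (min b (F0 t) - (a + F1 t))
      ≤ μ (A ∩ {ω | U ω ≤ F0 t ∧ t < Y1 ω}) := by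
    intro t
    have hsplit : A ∩ {ω | U ω ≤ F0 t ∧ t < Y1 ω}
        = (A ∩ {ω | U ω ≤ F0 t}) ∩ {ω | t < Y1 ω} := by
      ext ω; simp only [mem_inter_iff, mem_setOf_eq]; tauto
    rw [hsplit]
    have hdiff : (A ∩ {ω | U ω ≤ F0 t}) \ {ω | t < Y1 ω} ⊆ {ω | Y1 ω ≤ t} := by
      rintro ω ⟨_, hn⟩
      simp only [mem_setOf_eq] at hn ⊢
      exact le_of_not_gt hn
    have h1 : μ (A ∩ {ω | U ω ≤ F0 t})
        ≤ μ ((A ∩ {ω | U ω ≤ F0 t}) ∩ {ω | t < Y1 ω}) + μ {ω | Y1 ω ≤ t} :=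
      le_trans (measure_le_inter_add_diff μ _ _) (add_le_add le_rfl (measure_mono hdiff))
    calc ENNReal.ofReal (min b (F0 t) - (a + F1 t))
        = ENNReal.ofReal ((min b (F0 t) - a) - F1 t) := by
          rw [show min b (F0 t) - (a + F1 t) = (min b (F0 t) - a) - F1 t from by ring]
      _ = ENNReal.ofReal (min b (F0 t) - a) - ENNReal.ofReal (F1 t) :=
          ENNReal.ofReal_sub _ (hr0 t)
      _ = μ (A ∩ {ω | U ω ≤ F0 t}) - μ {ω | Y1 ω ≤ t} := by rw [hμAF0 t, hr1law t]
      _ ≤ _ := tsub_le_iff_right.mpr h1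
  have hupp : ∀ t, μ (A ∩ {ω | U ω ≤ F0 t ∧ t < Y1 ω})
      ≤ ENNReal.ofReal (min (min b (F0 t)) (1 + a - F1 t) - a) := by
    intro t
    have heq : min (min b (F0 t)) (1 + a - F1 t) - a = min (min b (F0 t) - a) (1 - F1 t) := by
      rcases le_total (min b (F0 t)) (1 + a - F1 t) with h | h
      · rw [min_eq_left h, min_eq_left (show min b (F0 t) - a ≤ 1 - F1 t by linarith)]
      · rw [min_eq_right h, min_eq_right (show (1:ℝ) - F1 t ≤ min b (F0 t) - a by linarith)]
        ring
    have hoMin : ENNReal.ofReal (min (min b (F0 t) - a) (1 - F1 t))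
        = min (ENNReal.ofReal (min b (F0 t) - a)) (ENNReal.ofReal (1 - F1 t)) :=
      Monotone.map_min (fun _ _ h => ENNReal.ofReal_le_ofReal h)
    rw [heq, hoMin]
    refine le_min ?_ ?_
    · rw [← hμAF0 t]
      exact measure_mono (inter_subset_inter_right A (fun ω h => h.1))
    · rw [← hY1gt t]
      exact measure_mono (fun ω h => h.2.2)
  -- assemble in ℝ≥0∞
  have hL_le_E : (∫⁻ u in Ioo a b, ENNReal.ofReal (max (Q1 (u - a) - Q0 u) 0))
      ≤ ∫⁻ ω in A, ENNReal.ofReal (max (Y1 ω - Q0 (U ω)) 0) ∂μ := by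
    rw [hswapL, hswapE]; exact lintegral_mono hlow
  have hE_le_U : (∫⁻ ω in A, ENNReal.ofReal (max (Y1 ω - Q0 (U ω)) 0) ∂μ)
      ≤ ∫⁻ u in Ioo a b, ENNReal.ofReal (max (Q1 (1 + a - u) - Q0 u) 0) := by
    rw [hswapE, hswapU]; exact lintegral_mono hupp
  -- finiteness
  have hEfin : (∫⁻ ω in A, ENNReal.ofReal (max (Y1 ω - Q0 (U ω)) 0) ∂μ) ≠ ⊤ := by
    refine ne_top_of_lt (lt_of_le_of_lt (lintegral_mono fun ω => ?_) hint.2)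
    exact Real.ofReal_le_enorm _
  have hIooIocL : (∫⁻ u in Ioo a b, ENNReal.ofReal (max (Q1 (u - a) - Q0 u) 0))
      = ∫⁻ u in Ioc a b, ENNReal.ofReal (max (Q1 (u - a) - Q0 u) 0) :=
    setLIntegral_congr (Ioo_ae_eq_Ioc)
  have hIooIocU : (∫⁻ u in Ioo a b, ENNReal.ofReal (max (Q1 (1 + a - u) - Q0 u) 0))
      = ∫⁻ u in Ioc a b, ENNReal.ofReal (max (Q1 (1 + a - u) - Q0 u) 0) :=
    setLIntegral_congr (Ioo_ae_eq_Ioc)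
  have hUfin : (∫⁻ u in Ioo a b, ENNReal.ofReal (max (Q1 (1 + a - u) - Q0 u) 0)) ≠ ⊤ := by
    rw [hIooIocU]
    refine ne_top_of_lt (lt_of_le_of_lt (lintegral_mono fun u => ?_) hintU.1.2)
    exact Real.ofReal_le_enorm _
  -- conversions to Bochner integrals
  have hconvE : (∫ ω in A, max (Y1 ω - Q0 (U ω)) 0 ∂μ)
      = (∫⁻ ω in A, ENNReal.ofReal (max (Y1 ω - Q0 (U ω)) 0) ∂μ).toReal :=
    integral_eq_lintegral_of_nonneg_ae (ae_of_all _ fun ω => le_max_right _ _)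
      hint.aestronglyMeasurable
  have hconvL : (∫ u in a..b, max (Q1 (u - a) - Q0 u) 0)
      = (∫⁻ u in Ioo a b, ENNReal.ofReal (max (Q1 (u - a) - Q0 u) 0)).toReal := by
    have h1 : (∫ u in Ioc a b, max (Q1 (u - a) - Q0 u) 0)
        = (∫⁻ u in Ioc a b, ENNReal.ofReal (max (Q1 (u - a) - Q0 u) 0)).toReal :=
      integral_eq_lintegral_of_nonneg_ae (ae_of_all _ fun u => le_max_right _ _)
        hintL.1.aestronglyMeasurable
    rw [intervalIntegral.integral_of_le hab.le, h1, hIooIocL]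
  have hconvU : (∫ u in a..b, max (Q1 (1 + a - u) - Q0 u) 0)
      = (∫⁻ u in Ioo a b, ENNReal.ofReal (max (Q1 (1 + a - u) - Q0 u) 0)).toReal := by
    have h1 : (∫ u in Ioc a b, max (Q1 (1 + a - u) - Q0 u) 0)
        = (∫⁻ u in Ioc a b, ENNReal.ofReal (max (Q1 (1 + a - u) - Q0 u) 0)).toReal :=
      integral_eq_lintegral_of_nonneg_ae (ae_of_all _ fun u => le_max_right _ _)
        hintU.1.aestronglyMeasurable
    rw [intervalIntegral.integral_of_le hab.le, h1, hIooIocU]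
  constructor
  · rw [hconvL, hconvE]
    exact ENNReal.toReal_mono hEfin hL_le_E
  · rw [hconvE, hconvU]
    exact ENNReal.toReal_mono hUfin hE_le_U
end
end
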